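/- arXiv:1106.2586 — 4 statements merged into one kernel-verified Lean document; each statement's English description precedes it below -/
import Mathlib

section
/- Let λ be a dominant coweight and J = {i ∈ S : ⟨λ, α_i⟩ = 0}. For x, x' ∈ W^J and y, y' ∈ W, the following are equivalent: (1) there exists u ∈ W_J with y'u ≤ y and xu⁻¹ ≤ x'; (2) there exists v ∈ W_J with y' ≤ yv and xv ≤ x'. -/
/-- The Bruhat order on a Coxeter group, defined via the subword property:
`u ≤ v` iff some reduced word for `v` contains a subword whose product is `u`. -/
def bruhatLE {B W : Type*} [Group W] {M : CoxeterMatrix B} (cs : CoxeterSystem M W)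
    (u v : W) : Prop :=
  ∃ l : List B, cs.IsReduced l ∧ cs.wordProd l = v ∧
    ∃ l' : List B, l'.Sublist l ∧ cs.wordProd l' = u

/-- `x` is a minimal length representative of its coset `x W_J`. -/
def isMinRep {B W : Type*} [Group W] {M : CoxeterMatrix B} (cs : CoxeterSystem M W)
    (J : Set B) (x : W) : Prop :=
  ∀ u ∈ Subgroup.closure (cs.simple '' J), cs.length x ≤ cs.length (x * u)


namespace BruhatAux

variable {B W : Type*} [Group W] {M : CoxeterMatrix B} (cs : CoxeterSystem M W)

open List

local prefix:100 "s" => cs.simple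
local prefix:100 "π" => cs.wordProd
local prefix:100 "ℓ" => cs.length
local prefix:100 "ris" => cs.rightInvSeq
local prefix:100 "lis" => cs.leftInvSeq

open scoped Classical

/-- The basic permutation of `W × ℤˣ` attached to a simple reflection. -/
noncomputable def etaFun (i : B) : W × ℤˣ → W × ℤˣ :=
  fun q => (s i * q.1 * s i, if q.1 = s i then -q.2 else q.2)

theorem etaFun_involutive (i : B) : Function.Involutive (etaFun cs i) := by
  intro q
  unfold etaFun
  have h1 : s i * (s i * q.1 * s i) * s i = q.1 := by
    calc s i * (s i * q.1 * s i) * s i = s i * s i * q.1 * (s i * s i) := by group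
    _ = q.1 := by rw [cs.simple_mul_simple_self]; simp
  have h2 : (s i * q.1 * s i = s i) ↔ (q.1 = s i) := by
    constructor
    · intro h
      have := congrArg (fun z => s i * z * s i) h
      simpa [← mul_assoc, cs.simple_mul_simple_cancel_left,
        cs.simple_mul_simple_cancel_right] using this
    · intro h; rw [h]; simp [cs.simple_mul_simple_self]
  by_cases hq : q.1 = s i
  · rw [if_pos hq, if_pos (h2.mpr hq), h1, neg_neg]
  · rw [if_neg hq, if_neg (fun h => hq (h2.mp h)), h1]

/-- The basic permutation as an `Equiv.Perm`. -/
noncomputable def eta (i : B) : Equiv.Perm (W × ℤˣ) :=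
  (etaFun_involutive cs i).toPerm

@[simp] theorem eta_apply (i : B) (q : W × ℤˣ) :
    eta cs i q = (s i * q.1 * s i, if q.1 = s i then -q.2 else q.2) := rfl

theorem conj_eq_iff (g x y : W) : g * x * g⁻¹ = y ↔ x = g⁻¹ * y * g := by
  constructor
  · intro h; rw [← h]; group
  · intro h; rw [h]; group

theorem simple_conj_eq_iff (j : B) (z y : W) : s j * z * s j = y ↔ z = s j * y * s j := by
  have cancel : ∀ w : W, s j * (s j * w * s j) * s j = w := by
    intro w
    calc s j * (s j * w * s j) * s j = (s j * s j) * w * (s j * s j) := by group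
    _ = w := by rw [cs.simple_mul_simple_self, one_mul, mul_one]
  constructor
  · intro h; rw [← h]; exact (cancel z).symm
  · intro h; rw [h]; exact cancel y

noncomputable def chi (i i' : B) (x : W) : ℤˣ :=
  (if x = s i' then -1 else 1) * (if s i' * x * s i' = s i then -1 else 1)

theorem conj_pow_simple (i i' : B) (r : ℕ) :
    ((s i * s i') ^ r)⁻¹ * s i' * (s i * s i') ^ r = s i' * (s i * s i') ^ (2 * r) := by
  have hconj : s i' * (s i * s i') ^ r * s i' = ((s i * s i') ^ r)⁻¹ := by
    have base : (MulAut.conj (s i')) (s i * s i') = (s i * s i')⁻¹ := by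
      rw [MulAut.conj_apply, cs.inv_simple]
      calc s i' * (s i * s i') * s i' = s i' * s i * (s i' * s i') := by group
      _ = s i' * s i := by rw [cs.simple_mul_simple_self, mul_one]
      _ = (s i * s i')⁻¹ := by rw [mul_inv_rev, cs.inv_simple, cs.inv_simple]
    have := map_pow (MulAut.conj (s i')) (s i * s i') r
    rw [base, inv_pow] at this
    simpa [MulAut.conj_apply, cs.inv_simple] using this
  have h1 : s i' * (((s i * s i') ^ r)⁻¹ * s i') = (s i * s i') ^ r := by
    have := congrArg Inv.inv hconj
    simpa [mul_inv_rev, cs.inv_simple, mul_assoc] using this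
  apply mul_left_cancel (a := s i')
  rw [cs.simple_mul_simple_cancel_left, ← mul_assoc, h1, two_mul, pow_add]

theorem conj_pow_simple' (i i' : B) (r : ℕ) :
    ((s i * s i') ^ r)⁻¹ * (s i' * s i * s i') * (s i * s i') ^ r
      = s i' * (s i * s i') ^ (2 * r + 1) := by
  have hp : s i' * s i * s i' = (s i * s i')⁻¹ * s i' := by
    rw [mul_inv_rev, cs.inv_simple, cs.inv_simple, mul_assoc]
  have step : ((s i * s i') ^ r)⁻¹ * (s i' * s i * s i') * (s i * s i') ^ r
      = (((s i * s i') ^ (r+1))⁻¹ * s i' * (s i * s i') ^ (r+1)) * (s i * s i')⁻¹ := by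
    rw [hp]
    generalize (s i * s i' : W) = p
    group
  rw [step, conj_pow_simple cs i i' (r+1)]
  have h2 : (2 * (r + 1)) = (2 * r + 1) + 1 := by ring
  rw [h2, pow_succ]
  generalize (s i * s i' : W) = p
  group

theorem sigma_apply (i i' : B) (q : W × ℤˣ) :
    (eta cs i * eta cs i') q =
      ((s i * s i') * q.1 * (s i * s i')⁻¹, chi cs i i' q.1 * q.2) := by
  rw [Equiv.Perm.mul_apply, eta_apply, eta_apply, chi, Prod.ext_iff]
  constructor <;> simp only
  · rw [mul_inv_rev, cs.inv_simple, cs.inv_simple]; group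
  · by_cases h1 : q.1 = s i' <;> by_cases h2 : s i' * q.1 * s i' = s i <;>
      simp [h1, h2]
  done

theorem sigma_pow_apply (i i' : B) (k : ℕ) (q : W × ℤˣ) :
    ((eta cs i * eta cs i') ^ k) q =
      ((s i * s i') ^ k * q.1 * ((s i * s i') ^ k)⁻¹,
        (∏ r ∈ Finset.range k,
          chi cs i i' ((s i * s i') ^ r * q.1 * ((s i * s i') ^ r)⁻¹)) * q.2) := by
  induction k generalizing q with
  | zero => simp
  | succ k ih =>
      rw [pow_succ, Equiv.Perm.mul_apply, sigma_apply, ih, Prod.ext_iff]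
      have h2 : ∀ (p x : W) (r : ℕ), p ^ r * (p * x * p⁻¹) * (p ^ r)⁻¹
          = p ^ (r + 1) * x * (p ^ (r + 1))⁻¹ := by
        intro p x r; group
      refine ⟨h2 _ _ _, ?_⟩
      rw [Finset.prod_range_succ']
      simp only [h2]
      simp only [pow_zero, one_mul, inv_one, mul_one]
      rw [mul_assoc]

theorem eta_liftable : M.IsLiftable (fun i => eta cs i) := by
  intro i i'
  apply Equiv.ext
  intro q
  rw [Equiv.Perm.one_apply, sigma_pow_apply, cs.simple_mul_simple_pow]
  have key : (∏ r ∈ Finset.range (M i i'),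
      chi cs i i' ((s i * s i') ^ r * q.1 * ((s i * s i') ^ r)⁻¹)) = 1 := by
    have hm : (M i i' : ℕ) = M i i' := rfl
    generalize q.1 = x
    set m := M i i' with hmdef
    set p := (s i * s i' : W) with hpdef
    have hpm : p ^ m = 1 := cs.simple_mul_simple_pow i i'
    have hcond1 : ∀ r : ℕ, (p ^ r * x * (p ^ r)⁻¹ = s i') ↔ (x = s i' * p ^ (2 * r)) := by
      intro r
      rw [conj_eq_iff, hpdef, conj_pow_simple cs i i' r]
    have hcond2 : ∀ r : ℕ, (s i' * (p ^ r * x * (p ^ r)⁻¹) * s i' = s i)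
        ↔ (x = s i' * p ^ (2 * r + 1)) := by
      intro r
      rw [simple_conj_eq_iff, conj_eq_iff, hpdef, conj_pow_simple' cs i i' r]
    have hfac : ∀ r : ℕ, chi cs i i' (p ^ r * x * (p ^ r)⁻¹)
        = (if x = s i' * p ^ (2 * r) then (-1 : ℤˣ) else 1)
          * (if x = s i' * p ^ (2 * r + 1) then (-1 : ℤˣ) else 1) := by
      intro r
      rw [chi]
      congr 1
      · exact if_congr (hcond1 r) rfl rfl
      · exact if_congr (hcond2 r) rfl rfl
    simp only [hfac]
    have pairs : ∀ k : ℕ, (∏ r ∈ Finset.range k,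
        ((if x = s i' * p ^ (2 * r) then (-1 : ℤˣ) else 1)
          * (if x = s i' * p ^ (2 * r + 1) then (-1 : ℤˣ) else 1)))
        = ∏ n ∈ Finset.range (2 * k), (if x = s i' * p ^ n then (-1 : ℤˣ) else 1) := by
      intro k
      induction k with
      | zero => simp
      | succ k ih =>
          rw [Finset.prod_range_succ, ih, show 2 * (k + 1) = (2 * k + 1) + 1 from by ring,
            Finset.prod_range_succ, Finset.prod_range_succ, mul_assoc]
    rw [pairs, two_mul, Finset.prod_range_add]
    have hshift : ∀ n : ℕ, (if x = s i' * p ^ (m + n) then (-1 : ℤˣ) else 1)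
        = (if x = s i' * p ^ n then (-1 : ℤˣ) else 1) := by
      intro n
      have : p ^ (m + n) = p ^ n := by rw [pow_add, hpm, one_mul]
      rw [this]
    simp only [hshift]
    exact Int.units_mul_self _
  rw [key]
  simp

/-- The lifted homomorphism `W →* Perm (W × ℤˣ)`. -/
noncomputable def phi : W →* Equiv.Perm (W × ℤˣ) :=
  cs.lift ⟨fun i => eta cs i, eta_liftable cs⟩

theorem phi_simple (i : B) : phi cs (s i) = eta cs i :=
  cs.lift_apply_simple (eta_liftable cs) i

/-- `nu cs ω t` is `(-1)` to the number of occurrences of `t` in the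
right inversion sequence of `ω`. -/
noncomputable def nu (ω : List B) (t : W) : ℤˣ :=
  ((ris ω).map (fun r => if r = t then (-1 : ℤˣ) else 1)).prod

@[simp] theorem nu_nil (t : W) : nu cs [] t = 1 := rfl

theorem nu_cons (i : B) (ω : List B) (t : W) :
    nu cs (i :: ω) t = (if (π ω)⁻¹ * s i * π ω = t then (-1 : ℤˣ) else 1) * nu cs ω t := by
  rw [nu, CoxeterSystem.rightInvSeq]
  simp [nu]

theorem phi_wordProd (ω : List B) (t : W) (ε : ℤˣ) :
    phi cs (π ω) (t, ε) = (π ω * t * (π ω)⁻¹, nu cs ω t * ε) := by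
  induction ω generalizing t ε with
  | nil => simp [cs.wordProd_nil]
  | cons i ω ih =>
      rw [cs.wordProd_cons, map_mul, Equiv.Perm.mul_apply, ih, phi_simple, eta_apply]
      simp only
      rw [nu_cons, Prod.ext_iff]
      constructor
      · simp only [mul_inv_rev, cs.inv_simple]
        group
      · simp only
        by_cases h : π ω * t * (π ω)⁻¹ = s i
        · have h2 : (π ω)⁻¹ * s i * π ω = t := by
            rw [← h]; group
          rw [if_pos h, if_pos h2, neg_mul, neg_mul, one_mul]
        · have h2 : ¬((π ω)⁻¹ * s i * π ω = t) := by
            intro hc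
            apply h
            rw [← hc]; group
          rw [if_neg h, if_neg h2, one_mul]

theorem nu_eq_of_wordProd_eq {ω ω' : List B} (h : π ω = π ω') (t : W) :
    nu cs ω t = nu cs ω' t := by
  have h1 := phi_wordProd cs ω t 1
  have h2 := phi_wordProd cs ω' t 1
  rw [h, h2] at h1
  have := congrArg Prod.snd h1
  simpa using this.symm

theorem rightInvSeq_append (α β : List B) :
    ris (α ++ β) = (ris α).map (fun r => (π β)⁻¹ * r * (π β)) ++ ris β := by
  induction α with
  | nil => simp
  | cons i α ih =>
      rw [cons_append, CoxeterSystem.rightInvSeq, CoxeterSystem.rightInvSeq, ih,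
        cs.wordProd_append]
      simp only [map_cons, cons_append, mul_inv_rev]
      congr 1
      group

theorem nu_append (α β : List B) (t : W) :
    nu cs (α ++ β) t = nu cs α (π β * t * (π β)⁻¹) * nu cs β t := by
  rw [nu, rightInvSeq_append, map_append, prod_append]
  congr 1
  rw [nu, map_map]
  congr 1
  apply List.map_congr_left
  intro r _
  simp only [Function.comp_apply]
  have hiff : ((π β)⁻¹ * r * π β = t) ↔ (r = π β * t * (π β)⁻¹) := by
    constructor
    · intro h; rw [← h]; group
    · intro h; rw [h]; group
  exact if_congr hiff rfl rfl

theorem leftInvSeq_eq_map (ω : List B) :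
    lis ω = (ris ω).map (fun r => π ω * r * (π ω)⁻¹) := by
  induction ω with
  | nil => simp
  | cons i ω ih =>
      rw [CoxeterSystem.leftInvSeq, CoxeterSystem.rightInvSeq, ih, cs.wordProd_cons]
      simp only [map_cons, map_map]
      congr 1
      · refine Eq.symm ?_
        rw [mul_inv_rev, cs.inv_simple]
        calc s i * π ω * ((π ω)⁻¹ * s i * π ω) * ((π ω)⁻¹ * s i)
            = s i * (π ω * (π ω)⁻¹) * s i * (π ω * (π ω)⁻¹) * s i := by group
        _ = s i := by
            rw [mul_inv_cancel]
            rw [mul_one, mul_one]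
            calc s i * s i * s i = s i * (s i * s i) := by group
            _ = s i := by rw [cs.simple_mul_simple_self, mul_one]
      · apply List.map_congr_left
        intro r _
        simp only [Function.comp_apply, MulAut.conj_apply, cs.inv_simple, mul_inv_rev]
        group

/-- `nu` of a word for a reflection, evaluated at that reflection, is `-1`. -/
theorem nu_reflection_word (α : List B) (i : B) :
    nu cs (α ++ [i] ++ α.reverse) (π α * s i * (π α)⁻¹) = -1 := by
  set t := π α * s i * (π α)⁻¹ with ht
  rw [nu_append, nu_append]
  have h1 : π ([i] ++ α.reverse) = s i * (π α)⁻¹ := by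
    rw [cs.wordProd_append, cs.wordProd_singleton, cs.wordProd_reverse]
  have h2 : π (α.reverse) = (π α)⁻¹ := cs.wordProd_reverse α
  have eA : π α.reverse * t * (π α.reverse)⁻¹ = s i := by
    rw [h2, ht]; group
  rw [eA]
  have eB : π [i] * s i * (π [i])⁻¹ = s i := by
    rw [cs.wordProd_singleton, cs.inv_simple]
    calc s i * s i * s i = s i * (s i * s i) := by group
    _ = s i := by rw [cs.simple_mul_simple_self, mul_one]
  rw [eB]
  -- middle factor nu [i] (s i) = -1
  have e3 : nu cs [i] (s i) = -1 := by
    rw [show ([i] : List B) = i :: [] from rfl, nu_cons, nu_nil]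
    simp
  -- last factor: nu (α.reverse) t = nu α (s i)
  have e4 : nu cs (α.reverse) t = nu cs α (s i) := by
    rw [nu, nu, cs.rightInvSeq_reverse, leftInvSeq_eq_map]
    rw [List.map_reverse, List.prod_reverse, map_map]
    congr 1
    apply List.map_congr_left
    intro r _
    simp only [Function.comp_apply]
    have hiff : (π α * r * (π α)⁻¹ = t) ↔ (r = s i) := by
      rw [ht]
      constructor
      · intro h
        have := congrArg (fun z => (π α)⁻¹ * z * π α) h
        calc r = (π α)⁻¹ * (π α * r * (π α)⁻¹) * π α := by group
        _ = (π α)⁻¹ * (π α * s i * (π α)⁻¹) * π α := by rw [this]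
        _ = s i := by group
      · intro h; rw [h]
    exact if_congr hiff rfl rfl
  rw [e3, e4]
  rw [mul_neg_one, neg_mul, Int.units_mul_self]

theorem mem_of_nu_ne_one {ω : List B} {t : W} (h : nu cs ω t ≠ 1) : t ∈ ris ω := by
  by_contra hmem
  apply h
  rw [nu]
  apply List.prod_eq_one
  intro x hx
  rw [List.mem_map] at hx
  obtain ⟨r, hr, hrx⟩ := hx
  rw [← hrx, if_neg]
  intro hc
  exact hmem (hc ▸ hr)

/-- Key parity fact: if `t` is a right inversion of `π ω`, then `nu cs ω t = -1`. -/
theorem nu_eq_neg_one_of_isRightInversion {ω : List B} {t : W}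
    (h : cs.IsRightInversion (π ω) t) : nu cs ω t = -1 := by
  obtain ⟨href, hlen⟩ := h
  obtain ⟨v, i, hvi⟩ := href
  obtain ⟨α, hα⟩ := cs.wordProd_surjective v
  obtain ⟨ζ, hζred, hζ⟩ := cs.exists_reduced_word' (π ω * t)
  set τ : List B := α ++ [i] ++ α.reverse with hτ
  have hπτ : π τ = t := by
    rw [hτ, cs.wordProd_append, cs.wordProd_append, cs.wordProd_singleton,
      cs.wordProd_reverse, hα, hvi]
  have hωζτ : π ω = π (ζ ++ τ) := by
    rw [cs.wordProd_append, hπτ, ← hζ]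
    have : t * t = 1 := by
      rw [hvi]
      calc v * s i * v⁻¹ * (v * s i * v⁻¹) = v * s i * (v⁻¹ * v) * s i * v⁻¹ := by group
      _ = 1 := by rw [inv_mul_cancel, mul_one]
                  calc v * s i * s i * v⁻¹ = v * (s i * s i) * v⁻¹ := by group
                  _ = 1 := by rw [cs.simple_mul_simple_self, mul_one, mul_inv_cancel]
    calc π ω = π ω * (t * t) := by rw [this, mul_one]
    _ = π ω * t * t := by group
  rw [nu_eq_of_wordProd_eq cs hωζτ, nu_append]
  have e1 : π τ * t * (π τ)⁻¹ = t := by rw [hπτ]; group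
  rw [e1]
  have e2 : nu cs ζ t = 1 := by
    by_contra h2
    have hmem := mem_of_nu_ne_one cs h2
    have := cs.isRightInversion_of_mem_rightInvSeq hζred hmem
    rw [← hζ] at this
    obtain ⟨-, hlt⟩ := this
    have ht2 : t * t = 1 := by
      rw [hvi]
      calc v * s i * v⁻¹ * (v * s i * v⁻¹) = v * s i * (v⁻¹ * v) * s i * v⁻¹ := by group
      _ = 1 := by rw [inv_mul_cancel, mul_one]
                  calc v * s i * s i * v⁻¹ = v * (s i * s i) * v⁻¹ := by group
                  _ = 1 := by rw [cs.simple_mul_simple_self, mul_one, mul_inv_cancel]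
    rw [mul_assoc, ht2, mul_one] at hlt
    omega
  rw [e2, one_mul]
  have := nu_reflection_word cs α i
  rw [hα, ← hvi] at this
  exact this

/-- Strong exchange property, for reduced words. -/
theorem strong_exchange {ω : List B} {t : W}
    (h : cs.IsRightInversion (π ω) t) :
    ∃ j, j < ω.length ∧ π ω * t = π (ω.eraseIdx j) := by
  have hmem : t ∈ ris ω := by
    apply mem_of_nu_ne_one
    rw [nu_eq_neg_one_of_isRightInversion cs h]
    decide
  rw [List.mem_iff_getElem] at hmem
  obtain ⟨j, hj, hjt⟩ := hmem
  rw [cs.length_rightInvSeq] at hj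
  refine ⟨j, hj, ?_⟩
  rw [← cs.wordProd_mul_getD_rightInvSeq ω j]
  congr 1
  rw [List.getD_eq_getElem _ _ (by rw [cs.length_rightInvSeq]; exact hj), hjt]

/-- Every word has a reduced sublist with the same product (deletion property). -/
theorem exists_reduced_sublist (ω : List B) :
    ∃ ω', ω'.Sublist ω ∧ cs.IsReduced ω' ∧ π ω' = π ω := by
  suffices H : ∀ n (ω : List B), ω.length ≤ n →
      ∃ ω', ω'.Sublist ω ∧ cs.IsReduced ω' ∧ π ω' = π ω by
    exact H ω.length ω le_rfl
  intro n
  induction n with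
  | zero =>
      intro ω hω
      have : ω = [] := List.eq_nil_of_length_eq_zero (Nat.le_zero.mp hω)
      subst this
      exact ⟨[], List.Sublist.refl _, by simp [CoxeterSystem.IsReduced], rfl⟩
  | succ n ih =>
      intro ω hω
      by_cases hred : cs.IsReduced ω
      · exact ⟨ω, List.Sublist.refl _, hred, rfl⟩
      · have hne : ω.length ≠ 0 := by
          intro h0
          have : ω = [] := List.eq_nil_of_length_eq_zero h0
          subst this
          exact hred (by simp [CoxeterSystem.IsReduced])
        have hwit : ¬ cs.IsReduced (ω.take ((ω.length - 1) + 1)) := by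
          have h9 : ω.length - 1 + 1 = ω.length := by omega
          rw [h9, List.take_length]
          exact hred
        have hex : ∃ k, ¬ cs.IsReduced (ω.take (k+1)) := ⟨ω.length - 1, hwit⟩
        set k := Nat.find hex with hkdef
        have hk : ¬ cs.IsReduced (ω.take (k+1)) := Nat.find_spec hex
        have hmin : ∀ j, j < k → cs.IsReduced (ω.take (j+1)) := by
          intro j hj
          have := Nat.find_min hex hj
          rwa [not_not] at this
        have hkred : cs.IsReduced (ω.take k) := by
          rcases k with _ | j
          · simp [CoxeterSystem.IsReduced]
          · exact hmin j (Nat.lt_succ_self j)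
        have hklt : k < ω.length := by
          have := Nat.find_min' hex hwit
          omega
        set α := ω.take k with hα
        have hαlen : α.length = k := by
          rw [hα, List.length_take]
          omega
        have htake : ω.take (k+1) = α ++ [ω[k]] := by
          rw [List.take_succ, List.getElem?_eq_getElem hklt]
          rfl
        have hπα : ℓ (π α) = k := by rw [hkred]; exact hαlen
        have hinv : cs.IsRightInversion (π α) (s ω[k]) := by
          constructor
          · exact cs.isReflection_simple _
          · rcases cs.length_mul_simple (π α) ω[k] with h | h
            · exfalso
              apply hk
              rw [htake, CoxeterSystem.IsReduced, cs.wordProd_append, cs.wordProd_singleton,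
                h, hπα]
              simp [hαlen]
            · omega
        obtain ⟨j, hjlt, hexch⟩ := strong_exchange cs hinv
        set ω₂ := α.eraseIdx j ++ ω.drop (k+1) with hω₂
        have hπω₂ : π ω₂ = π ω := by
          rw [hω₂, cs.wordProd_append, ← hexch]
          have : π ω = π (ω.take (k+1)) * π (ω.drop (k+1)) := by
            rw [← cs.wordProd_append, List.take_append_drop]
          rw [this, htake, cs.wordProd_append, cs.wordProd_singleton]
        have hsub : ω₂.Sublist ω := by
          have h1 : (α.eraseIdx j ++ ω.drop (k+1)).Sublist (α ++ ω.drop (k+1)) :=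
            (List.eraseIdx_sublist α j).append_right _
          have h2 : (α ++ ω.drop (k+1)).Sublist ((α ++ [ω[k]]) ++ ω.drop (k+1)) := by
            rw [List.append_assoc]
            exact (List.sublist_cons_self _ _).append_left α
          have h3 : ((α ++ [ω[k]]) ++ ω.drop (k+1)) = ω := by
            rw [← htake, List.take_append_drop]
          rw [← h3]
          exact h1.trans h2
        have hlen₂ : ω₂.length ≤ n := by
          rw [hω₂, List.length_append]
          have e1 : (α.eraseIdx j).length + 1 = α.length :=
            List.length_eraseIdx_add_one (by omega)
          have e2 : (ω.drop (k+1)).length = ω.length - (k+1) := List.length_drop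
          omega
        obtain ⟨ω', hsub', hred', hπ'⟩ := ih ω₂ hlen₂
        exact ⟨ω', hsub'.trans hsub, hred', by rw [hπ', hπω₂]⟩

/-- A single step in a Bruhat chain. -/
def stepB (a b : W) : Prop :=
  (∃ t, cs.IsReflection t ∧ b = a * t) ∧ ℓ a < ℓ b

/-- The Bruhat order as the reflexive-transitive closure of chain steps. -/
def leC : W → W → Prop := Relation.ReflTransGen (stepB cs)

theorem leC_refl (a : W) : leC cs a a := Relation.ReflTransGen.refl

theorem leC_trans {a b c : W} (h1 : leC cs a b) (h2 : leC cs b c) : leC cs a c :=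
  Relation.ReflTransGen.trans h1 h2

theorem leC_length_le {a b : W} (h : leC cs a b) : ℓ a ≤ ℓ b := by
  induction h with
  | refl => exact le_rfl
  | tail _ hstep ih => exact ih.trans hstep.2.le

theorem stepB_left {a : W} {i : B} (h : ℓ a < ℓ (s i * a)) : stepB cs a (s i * a) := by
  refine ⟨⟨a⁻¹ * s i * a, ?_, by group⟩, h⟩
  have := (cs.isReflection_simple i).conj a⁻¹
  simpa using this

theorem stepB_right {a : W} {i : B} (h : ℓ a < ℓ (a * s i)) : stepB cs a (a * s i) :=
  ⟨⟨s i, cs.isReflection_simple i, rfl⟩, h⟩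

/-- Chain implies strong subword property: every reduced word for the larger element
contains a reduced word for the smaller element as a sublist. -/
theorem leC_subword {u v : W} (huv : leC cs u v) :
    ∀ l : List B, cs.IsReduced l → π l = v →
      ∃ l', l'.Sublist l ∧ cs.IsReduced l' ∧ π l' = u := by
  induction huv with
  | refl =>
      intro l hl hlv
      exact ⟨l, List.Sublist.refl _, hl, hlv⟩
  | @tail b c hub hstep ih =>
      intro l hl hlv
      obtain ⟨⟨t, hrefl, hbc⟩, hlen⟩ := hstep
      have hinv : cs.IsRightInversion (π l) t := by
        refine ⟨hrefl, ?_⟩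
        rw [hlv, hbc, mul_assoc, hrefl.mul_self, mul_one]
        rw [hbc] at hlen
        exact hlen
      obtain ⟨j, hjlt, hexch⟩ := strong_exchange cs hinv
      have hπerase : π (l.eraseIdx j) = b := by
        rw [← hexch, hlv, hbc, mul_assoc, hrefl.mul_self, mul_one]
      obtain ⟨ζ, hζsub, hζred, hζπ⟩ := exists_reduced_sublist cs (l.eraseIdx j)
      obtain ⟨l', hsub', hred', hπ'⟩ := ih ζ hζred (by rw [hζπ, hπerase])
      exact ⟨l', hsub'.trans (hζsub.trans (List.eraseIdx_sublist l j)), hred', hπ'⟩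

theorem stepB_def {a b : W} :
    stepB cs a b ↔ ((∃ t, cs.IsReflection t ∧ b = a * t) ∧ ℓ a < ℓ b) := Iff.rfl

theorem Z3aux (n : ℕ)
    (TS : ∀ m : List B, m.length < n → cs.IsReduced m →
      ∀ m', m'.Sublist m → leC cs (π m') (π m))
    {c h : W} {j : B} (hstep : stepB cs c h) (hh : ℓ h < n)
    (hsc : ℓ c < ℓ (s j * c)) (hsh : ℓ (s j * h) < ℓ h) :
    leC cs (s j * c) h := by
  obtain ⟨⟨t, hrefl, hct⟩, hlen⟩ := (stepB_def cs).mp hstep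
  obtain ⟨ζ, hζred, hζ⟩ := cs.exists_reduced_word' (s j * h)
  have hζlen : ζ.length = ℓ (s j * h) := by rw [← hζred, ← hζ]
  have hπjζ : π (j :: ζ) = h := by
    rw [cs.wordProd_cons, ← hζ, cs.simple_mul_simple_cancel_left]
  have hinv : cs.IsRightInversion (π (j :: ζ)) t := by
    refine ⟨hrefl, ?_⟩
    rw [hπjζ, hct, mul_assoc, hrefl.mul_self, mul_one]
    rw [hct] at hlen
    exact hlen
  obtain ⟨k, hklt, hexch⟩ := strong_exchange cs hinv
  rw [hπjζ, hct, mul_assoc, hrefl.mul_self, mul_one] at hexch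
  -- hexch : c = π ((j :: ζ).eraseIdx k)
  rcases k with _ | k
  · -- c = π ζ = s j * h, so s j * c = h
    rw [List.eraseIdx_cons_zero] at hexch
    rw [hexch, ← hζ, cs.simple_mul_simple_cancel_left]
    exact Relation.ReflTransGen.refl
  · rw [List.eraseIdx_cons_succ, cs.wordProd_cons] at hexch
    -- c = s j * π (ζ.eraseIdx k)
    have hsjc : s j * c = π (ζ.eraseIdx k) := by
      rw [hexch, cs.simple_mul_simple_cancel_left]
    have hζn : ζ.length < n := by
      have h1 : ℓ (s j * h) < ℓ h := hsh
      omega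
    have hchain : leC cs (π (ζ.eraseIdx k)) (π ζ) :=
      TS ζ hζn hζred _ (List.eraseIdx_sublist ζ k)
    have hstep2 : stepB cs (π ζ) h := by
      rw [← hζ]
      have h8 : ℓ (s j * h) < ℓ (s j * (s j * h)) := by
        rw [cs.simple_mul_simple_cancel_left]
        exact hsh
      have h9 := stepB_left cs h8
      rwa [cs.simple_mul_simple_cancel_left] at h9
    rw [hsjc]
    exact Relation.ReflTransGen.tail hchain hstep2

theorem Zupaux (n : ℕ)
    (TS : ∀ m : List B, m.length < n → cs.IsReduced m →
      ∀ m', m'.Sublist m → leC cs (π m') (π m))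
    {c d : W} {j : B} (hcd : leC cs c d) (hd : ℓ d < n)
    (hsd : ℓ d < ℓ (s j * d)) (hsc : ℓ c < ℓ (s j * c)) :
    leC cs (s j * c) (s j * d) := by
  revert hsc
  induction hcd using Relation.ReflTransGen.head_induction_on with
  | refl => intro _; exact Relation.ReflTransGen.refl
  | @head a h hstep htail ih =>
      intro hsc
      by_cases hsh : ℓ h < ℓ (s j * h)
      · have ih' := ih hsh
        obtain ⟨⟨t, hrefl, hht⟩, hlen⟩ := (stepB_def cs).mp hstep
        have hmul : s j * h = (s j * a) * t := by rw [hht]; group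
        have hlen2 : ℓ (s j * a) < ℓ (s j * h) := by
          rcases cs.length_simple_mul a j with h1 | h1 <;>
          rcases cs.length_simple_mul h j with h2 | h2 <;> omega
        exact Relation.ReflTransGen.head
          ((stepB_def cs).mpr ⟨⟨t, hrefl, hmul⟩, hlen2⟩) ih'
      · push_neg at hsh
        have hsh' : ℓ (s j * h) < ℓ h :=
          lt_of_le_of_ne hsh (cs.length_simple_mul_ne h j)
        have hhn : ℓ h < n := lt_of_le_of_lt (leC_length_le cs htail) hd
        have hZ3 := Z3aux cs n TS hstep hhn hsc hsh'
        exact Relation.ReflTransGen.trans hZ3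
          (Relation.ReflTransGen.tail htail (stepB_left cs hsd))

/-- The subword property: a sublist of a reduced word is below it in the chain order. -/
theorem subword_leC : ∀ l : List B, cs.IsReduced l →
    ∀ l', l'.Sublist l → leC cs (π l') (π l) := by
  suffices H : ∀ n (l : List B), l.length ≤ n → cs.IsReduced l →
      ∀ l', l'.Sublist l → leC cs (π l') (π l) by
    exact fun l hl l' hsub => H l.length l le_rfl hl l' hsub
  intro n
  induction n with
  | zero =>
      intro l hl _ l' hsub
      have : l = [] := List.eq_nil_of_length_eq_zero (Nat.le_zero.mp hl)
      subst this
      have : l' = [] := List.sublist_nil.mp hsub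
      subst this
      exact Relation.ReflTransGen.refl
  | succ n ih =>
      intro l hlen hred l' hsub
      rcases l with _ | ⟨j, l₀⟩
      · have : l' = [] := List.sublist_nil.mp hsub
        subst this
        exact Relation.ReflTransGen.refl
      · have hl₀red : cs.IsReduced l₀ := by
          have := hred.drop 1
          simpa using this
        have hl₀len : l₀.length ≤ n := by
          simp only [List.length_cons] at hlen
          omega
        have hd0 : ℓ (π l₀) = l₀.length := hl₀red
        have hdtop : ℓ (π (j :: l₀)) = l₀.length + 1 := by
          rw [hred]
          simp
        have hsd : ℓ (π l₀) < ℓ (s j * π l₀) := by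
          rw [← cs.wordProd_cons, hdtop, hd0]
          omega
        have hstepTop : stepB cs (π l₀) (π (j :: l₀)) := by
          rw [cs.wordProd_cons]
          exact stepB_left cs hsd
        rcases List.sublist_cons_iff.mp hsub with hsub0 | ⟨r, rfl, hr⟩
        · exact Relation.ReflTransGen.tail (ih l₀ hl₀len hl₀red l' hsub0) hstepTop
        · have hrchain : leC cs (π r) (π l₀) := ih l₀ hl₀len hl₀red r hr
          by_cases hup : ℓ (π r) < ℓ (s j * π r)
          · have := Zupaux cs (n + 1) (fun m hm => ih m (by omega)) hrchain
              (by omega) hsd hup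
            rw [cs.wordProd_cons, cs.wordProd_cons]
            exact this
          · push_neg at hup
            have hdown : ℓ (s j * π r) < ℓ (π r) :=
              lt_of_le_of_ne hup (cs.length_simple_mul_ne (π r) j)
            have hstepr : stepB cs (s j * π r) (π r) := by
              have h8 : ℓ (s j * π r) < ℓ (s j * (s j * π r)) := by
                rw [cs.simple_mul_simple_cancel_left]
                exact hdown
              have h9 := stepB_left cs h8
              rwa [cs.simple_mul_simple_cancel_left] at h9
            rw [cs.wordProd_cons]
            exact Relation.ReflTransGen.tail
              (Relation.ReflTransGen.head hstepr hrchain) hstepTop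

theorem leC_of_bruhat {u v : W} (h : bruhatLE cs u v) : leC cs u v := by
  obtain ⟨l, hred, hv, l', hsub, hu⟩ := h
  have := subword_leC cs l hred l' hsub
  rwa [hv, hu] at this

theorem bruhat_of_leC {u v : W} (h : leC cs u v) : bruhatLE cs u v := by
  obtain ⟨l, hred, hv⟩ := cs.exists_reduced_word' v
  obtain ⟨l', hsub, hred', hu⟩ := leC_subword cs h l hred hv.symm
  exact ⟨l, hred, hv.symm, l', hsub, hu⟩

theorem bruhat_iff_leC {u v : W} : bruhatLE cs u v ↔ leC cs u v :=
  ⟨leC_of_bruhat cs, bruhat_of_leC cs⟩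

theorem bruhat_refl (u : W) : bruhatLE cs u u :=
  bruhat_of_leC cs Relation.ReflTransGen.refl

theorem bruhat_trans {u v w : W} (h1 : bruhatLE cs u v) (h2 : bruhatLE cs v w) :
    bruhatLE cs u w :=
  bruhat_of_leC cs (Relation.ReflTransGen.trans (leC_of_bruhat cs h1) (leC_of_bruhat cs h2))

theorem leC_inv {a b : W} (h : leC cs a b) : leC cs a⁻¹ b⁻¹ := by
  induction h with
  | refl => exact Relation.ReflTransGen.refl
  | @tail b c hab hstep ih =>
      obtain ⟨⟨t, hrefl, hbc⟩, hlen⟩ := (stepB_def cs).mp hstep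
      refine Relation.ReflTransGen.tail ih ((stepB_def cs).mpr ⟨⟨b * t * b⁻¹, ?_, ?_⟩, ?_⟩)
      · exact hrefl.conj b
      · rw [hbc, mul_inv_rev, hrefl.inv]
        group
      · rw [cs.length_inv, cs.length_inv]
        exact hlen

theorem leC_mul_simple_right {u z : W} {j : B} (h : leC cs u z)
    (hu : ℓ u < ℓ (u * s j)) (hz : ℓ z < ℓ (z * s j)) :
    leC cs (u * s j) (z * s j) := by
  have key : ∀ w : W, ℓ (s j * w⁻¹) = ℓ (w * s j) := by
    intro w
    rw [← cs.length_inv (s j * w⁻¹), mul_inv_rev, inv_inv, cs.inv_simple]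
  have h1 : leC cs u⁻¹ z⁻¹ := leC_inv cs h
  have h2 := Zupaux cs (ℓ z⁻¹ + 1) (fun m hm hr m' hs => subword_leC cs m hr m' hs)
    h1 (by omega) (by rw [key]; rw [cs.length_inv]; exact hz)
    (by rw [key]; rw [cs.length_inv]; exact hu)
  have h3 := leC_inv cs h2
  have e : ∀ w : W, (s j * w⁻¹)⁻¹ = w * s j := by
    intro w
    rw [mul_inv_rev, inv_inv, cs.inv_simple]
  rw [e, e] at h3
  exact h3

theorem sublist_concat_cases {l' ζ : List B} {j : B} (h : l'.Sublist (ζ ++ [j])) :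
    l'.Sublist ζ ∨ ∃ r, l' = r ++ [j] ∧ r.Sublist ζ := by
  have h1 : l'.reverse.Sublist (j :: ζ.reverse) := by
    have := h.reverse
    rwa [List.reverse_append, List.reverse_singleton] at this
  rcases List.sublist_cons_iff.mp h1 with h2 | ⟨r, hr, hrsub⟩
  · left
    have := h2.reverse
    simpa using this
  · right
    refine ⟨r.reverse, ?_, ?_⟩
    · have := congrArg List.reverse hr
      simpa using this
    · have := hrsub.reverse
      simpa using this

/-- Reduced word for `z` ending in `j`, when `z * s j < z`. -/
theorem exists_reduced_word_concat {z : W} {j : B} (h : ℓ (z * s j) < ℓ z) :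
    ∃ ζ, cs.IsReduced (ζ ++ [j]) ∧ π (ζ ++ [j]) = z ∧ cs.IsReduced ζ ∧ π ζ = z * s j := by
  obtain ⟨ζ, hζred, hζ⟩ := cs.exists_reduced_word' (z * s j)
  have hπ : π (ζ ++ [j]) = z := by
    rw [cs.wordProd_append, cs.wordProd_singleton, ← hζ, cs.simple_mul_simple_cancel_right]
  have hlen : ℓ (z * s j) + 1 = ℓ z := by
    rcases cs.length_mul_simple z j with h1 | h1 <;> omega
  refine ⟨ζ, ?_, hπ, hζred, hζ.symm⟩
  rw [CoxeterSystem.IsReduced, hπ, List.length_append, List.length_singleton]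
  have : ζ.length = ℓ (z * s j) := by rw [← hζred, ← hζ]
  omega

/-- Property F3 : if `u ≤ z` then `u s ≤ z` or `u s ≤ z s`. -/
theorem bruhat_F3 {u z : W} (j : B) (h : bruhatLE cs u z) :
    bruhatLE cs (u * s j) z ∨ bruhatLE cs (u * s j) (z * s j) := by
  by_cases hu : ℓ (u * s j) < ℓ u
  · left
    apply bruhat_of_leC
    refine Relation.ReflTransGen.head ?_ (leC_of_bruhat cs h)
    have h8 : ℓ (u * s j) < ℓ (u * s j * s j) := by
      rw [cs.simple_mul_simple_cancel_right]
      exact hu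
    have h9 := stepB_right cs h8
    rwa [cs.simple_mul_simple_cancel_right] at h9
  · push_neg at hu
    have hu' : ℓ u < ℓ (u * s j) :=
      lt_of_le_of_ne hu (Ne.symm (cs.length_mul_simple_ne u j))
    by_cases hz : ℓ z < ℓ (z * s j)
    · right
      exact bruhat_of_leC cs (leC_mul_simple_right cs (leC_of_bruhat cs h) hu' hz)
    · push_neg at hz
      have hz' : ℓ (z * s j) < ℓ z :=
        lt_of_le_of_ne hz (cs.length_mul_simple_ne z j)
      left
      obtain ⟨ζ, hζjred, hζjπ, hζred, hζπ⟩ := exists_reduced_word_concat cs hz'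
      obtain ⟨l', hsub, hl'red, hl'π⟩ :=
        leC_subword cs (leC_of_bruhat cs h) (ζ ++ [j]) hζjred hζjπ
      rcases sublist_concat_cases hsub with h2 | ⟨r, rfl, hrsub⟩
      · apply bruhat_of_leC
        have := subword_leC cs (ζ ++ [j]) hζjred (l' ++ [j]) (h2.append_right [j])
        rw [hζjπ, cs.wordProd_append, cs.wordProd_singleton, hl'π] at this
        exact this
      · apply bruhat_of_leC
        have h3 : u * s j = π r := by
          rw [← hl'π, cs.wordProd_append, cs.wordProd_singleton,
            cs.simple_mul_simple_cancel_right]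
        have := subword_leC cs (ζ ++ [j]) hζjred r
          (hrsub.trans (List.sublist_append_left ζ [j]))
        rw [hζjπ, ← h3] at this
        exact this

/-- Property F4 : if `u ≤ z s` then `u ≤ z` or `u s ≤ z`. -/
theorem bruhat_F4 {u z : W} (j : B) (h : bruhatLE cs u (z * s j)) :
    bruhatLE cs u z ∨ bruhatLE cs (u * s j) z := by
  by_cases hz : ℓ (z * s j) < ℓ z
  · left
    apply bruhat_of_leC
    refine Relation.ReflTransGen.tail (leC_of_bruhat cs h) ?_
    have h8 : ℓ (z * s j) < ℓ (z * s j * s j) := by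
      rw [cs.simple_mul_simple_cancel_right]
      exact hz
    have h9 := stepB_right cs h8
    rwa [cs.simple_mul_simple_cancel_right] at h9
  · push_neg at hz
    have hz' : ℓ z < ℓ (z * s j) :=
      lt_of_le_of_ne hz (Ne.symm (cs.length_mul_simple_ne z j))
    obtain ⟨ζ, hζred, hζπ⟩ := cs.exists_reduced_word' z
    have hζjred : cs.IsReduced (ζ ++ [j]) := by
      rw [CoxeterSystem.IsReduced, cs.wordProd_append, cs.wordProd_singleton,
        List.length_append, List.length_singleton, ← hζπ]
      have : ζ.length = ℓ z := by rw [← hζred, ← hζπ]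
      rcases cs.length_mul_simple z j with h1 | h1 <;> omega
    have hζjπ : π (ζ ++ [j]) = z * s j := by
      rw [cs.wordProd_append, cs.wordProd_singleton, hζπ]
    obtain ⟨l', hsub, hl'red, hl'π⟩ :=
      leC_subword cs (leC_of_bruhat cs h) (ζ ++ [j]) hζjred hζjπ
    rcases sublist_concat_cases hsub with h2 | ⟨r, rfl, hrsub⟩
    · left
      apply bruhat_of_leC
      have := subword_leC cs ζ hζred l' h2
      rw [hζπ, ← hl'π]
      exact this
    · right
      apply bruhat_of_leC
      have h3 : (π (r ++ [j])) * s j = π r := by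
        rw [cs.wordProd_append, cs.wordProd_singleton, cs.simple_mul_simple_cancel_right]
      have := subword_leC cs ζ hζred r hrsub
      rw [hζπ, ← hl'π, h3]
      exact this

theorem wordProd_mem_closure {J : Set B} {l : List B} (hl : ∀ b ∈ l, b ∈ J) :
    π l ∈ Subgroup.closure (cs.simple '' J) := by
  induction l with
  | nil => rw [cs.wordProd_nil]; exact Subgroup.one_mem _
  | cons i l ih =>
      rw [cs.wordProd_cons]
      exact Subgroup.mul_mem _
        (Subgroup.subset_closure ⟨i, hl i (List.mem_cons_self), rfl⟩)
        (ih (fun b hb => hl b (List.mem_cons_of_mem i hb)))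

theorem mem_closure_iff_word {J : Set B} {w : W} :
    w ∈ Subgroup.closure (cs.simple '' J) ↔ ∃ l, (∀ b ∈ l, b ∈ J) ∧ π l = w := by
  constructor
  · intro hw
    induction hw using Subgroup.closure_induction with
    | mem x hx =>
        obtain ⟨i, hi, rfl⟩ := hx
        exact ⟨[i], by simpa using hi, cs.wordProd_singleton i⟩
    | one => exact ⟨[], by simp, cs.wordProd_nil⟩
    | mul x y _ _ hx hy =>
        obtain ⟨l1, hl1, rfl⟩ := hx
        obtain ⟨l2, hl2, rfl⟩ := hy
        refine ⟨l1 ++ l2, ?_, cs.wordProd_append l1 l2⟩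
        intro b hb
        rcases List.mem_append.mp hb with h | h
        · exact hl1 b h
        · exact hl2 b h
    | inv x _ hx =>
        obtain ⟨l, hl, rfl⟩ := hx
        exact ⟨l.reverse, fun b hb => hl b (List.mem_reverse.mp hb),
          cs.wordProd_reverse l⟩
  · rintro ⟨l, hl, rfl⟩
    exact wordProd_mem_closure cs hl

/-- If `x` is a minimal coset representative and `ρ` is a reduced word with letters
in `J`, then a reduced word for `x` concatenated with `ρ` is reduced. -/
theorem minRep_concat_reduced {J : Set B} {x : W} (hx : isMinRep cs J x)
    {ξ : List B} (hξred : cs.IsReduced ξ) (hξ : π ξ = x) :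
    ∀ ρ : List B, cs.IsReduced ρ → (∀ b ∈ ρ, b ∈ J) → cs.IsReduced (ξ ++ ρ) := by
  intro ρ
  induction ρ using List.reverseRecOn with
  | nil => intro _ _; simpa using hξred
  | append_singleton σ j ih =>
      intro hred hJ
      have hσred : cs.IsReduced σ := by
        have := hred.take σ.length
        rwa [List.take_left] at this
      have hσJ : ∀ b ∈ σ, b ∈ J := fun b hb => hJ b (List.mem_append_left _ hb)
      have hΩ : cs.IsReduced (ξ ++ σ) := ih hσred hσJ
      have hπΩ : ℓ (π (ξ ++ σ)) = ξ.length + σ.length := by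
        rw [hΩ, List.length_append]
      have hxlen : ℓ x = ξ.length := by rw [← hξ, hξred]
      rw [← List.append_assoc]
      rcases cs.length_mul_simple (π (ξ ++ σ)) j with hgood | hbad
      · rw [CoxeterSystem.IsReduced, cs.wordProd_append, cs.wordProd_singleton, hgood,
          hπΩ]
        simp [List.length_append]
        omega
      · exfalso
        have hinv : cs.IsRightInversion (π (ξ ++ σ)) (s j) :=
          ⟨cs.isReflection_simple j, by omega⟩
        obtain ⟨k, hklt, hexch⟩ := strong_exchange cs hinv
        rw [List.length_append] at hklt
        by_cases hk : k < ξ.length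
        · -- erased inside ξ : contradict minimality of x
          rw [List.eraseIdx_append_of_lt_length hk σ] at hexch
          have hexch' : x * (π σ * s j * (π σ)⁻¹) = π (ξ.eraseIdx k) := by
            rw [cs.wordProd_append, cs.wordProd_append, hξ] at hexch
            calc x * (π σ * s j * (π σ)⁻¹)
                = x * π σ * s j * (π σ)⁻¹ := by group
            _ = π (ξ.eraseIdx k) * π σ * (π σ)⁻¹ := by rw [hexch]
            _ = π (ξ.eraseIdx k) := by group
          have hmem : π σ * s j * (π σ)⁻¹ ∈ Subgroup.closure (cs.simple '' J) := by
            have h1 : π σ ∈ Subgroup.closure (cs.simple '' J) :=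
              wordProd_mem_closure cs hσJ
            have h2 : s j ∈ Subgroup.closure (cs.simple '' J) :=
              Subgroup.subset_closure ⟨j, hJ j (by simp), rfl⟩
            exact Subgroup.mul_mem _ (Subgroup.mul_mem _ h1 h2) (Subgroup.inv_mem _ h1)
          have hmin := hx _ hmem
          rw [hexch'] at hmin
          have hle : ℓ (π (ξ.eraseIdx k)) ≤ ξ.length - 1 := by
            have := cs.length_wordProd_le (ξ.eraseIdx k)
            have hlen := List.length_eraseIdx_add_one hk
            omega
          omega
        · -- erased inside σ : contradict reducedness of σ ++ [j]
          push_neg at hk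
          rw [List.eraseIdx_append_of_length_le hk σ] at hexch
          have hexch' : π σ * s j = π (σ.eraseIdx (k - ξ.length)) := by
            rw [cs.wordProd_append, cs.wordProd_append, hξ] at hexch
            have := hexch
            rw [mul_assoc] at this
            exact mul_left_cancel this
          have h1 : ℓ (π σ * s j) = σ.length + 1 := by
            have : π (σ ++ [j]) = π σ * s j := by
              rw [cs.wordProd_append, cs.wordProd_singleton]
            rw [← this, hred]
            simp
          have h2 : ℓ (π (σ.eraseIdx (k - ξ.length))) ≤ σ.length :=
            (cs.length_wordProd_le _).trans
              (List.Sublist.length_le (List.eraseIdx_sublist _ _))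
          rw [hexch'] at h1
          omega

/-- Monotonicity along `W_J` for minimal representatives. -/
theorem minRep_mul_mono {J : Set B} {x : W} (hx : isMinRep cs J x)
    {ρ ρ' : List B} (hρred : cs.IsReduced ρ) (hρJ : ∀ b ∈ ρ, b ∈ J)
    (hsub : ρ'.Sublist ρ) :
    bruhatLE cs (x * π ρ') (x * π ρ) := by
  obtain ⟨ξ, hξred, hξ⟩ := cs.exists_reduced_word' x
  refine ⟨ξ ++ ρ, minRep_concat_reduced cs hx hξred hξ.symm ρ hρred hρJ, ?_,
    ξ ++ ρ', hsub.append_left ξ, ?_⟩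
  · rw [cs.wordProd_append, ← hξ]
  · rw [cs.wordProd_append, ← hξ]

theorem claimA (ρ : List B) :
    ∀ a b : W, bruhatLE cs (a * (π ρ)⁻¹) b →
      ∃ ρ', ρ'.Sublist ρ ∧ bruhatLE cs a (b * π ρ') := by
  induction ρ using List.reverseRecOn with
  | nil =>
      intro a b h
      refine ⟨[], List.Sublist.refl _, ?_⟩
      rw [cs.wordProd_nil, mul_one]
      rw [cs.wordProd_nil, inv_one, mul_one] at h
      exact h
  | append_singleton σ j ih =>
      intro a b h
      have h' : bruhatLE cs ((a * s j) * (π σ)⁻¹) b := by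
        rw [cs.wordProd_append, cs.wordProd_singleton, mul_inv_rev, cs.inv_simple,
          ← mul_assoc] at h
        exact h
      obtain ⟨σ', hsub, hle⟩ := ih (a * s j) b h'
      rcases bruhat_F3 cs j hle with hcase | hcase
      · rw [cs.simple_mul_simple_cancel_right] at hcase
        exact ⟨σ', hsub.trans (List.sublist_append_left σ [j]), hcase⟩
      · rw [cs.simple_mul_simple_cancel_right] at hcase
        refine ⟨σ' ++ [j], hsub.append_right [j], ?_⟩
        rw [cs.wordProd_append, cs.wordProd_singleton, ← mul_assoc]
        exact hcase

theorem claimB (ρ : List B) :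
    ∀ a b : W, bruhatLE cs a (b * π ρ) →
      ∃ ρ', ρ'.Sublist ρ ∧ bruhatLE cs (a * (π ρ')⁻¹) b := by
  induction ρ using List.reverseRecOn with
  | nil =>
      intro a b h
      refine ⟨[], List.Sublist.refl _, ?_⟩
      rw [cs.wordProd_nil, inv_one, mul_one]
      rw [cs.wordProd_nil, mul_one] at h
      exact h
  | append_singleton σ j ih =>
      intro a b h
      have h' : bruhatLE cs a ((b * π σ) * s j) := by
        rw [cs.wordProd_append, cs.wordProd_singleton, ← mul_assoc] at h
        exact h
      rcases bruhat_F4 cs j h' with hcase | hcase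
      · obtain ⟨σ', hsub, hle⟩ := ih a b hcase
        exact ⟨σ', hsub.trans (List.sublist_append_left σ [j]), hle⟩
      · obtain ⟨σ', hsub, hle⟩ := ih (a * s j) b hcase
        refine ⟨σ' ++ [j], hsub.append_right [j], ?_⟩
        rw [cs.wordProd_append, cs.wordProd_singleton, mul_inv_rev, cs.inv_simple,
          ← mul_assoc]
        exact hle

end BruhatAux

open BruhatAux

/-- For `x, x' ∈ W^J` and `y, y' ∈ W` in a finite Weyl group, the existence of
`u ∈ W_J` with `y'u ≤ y` and `xu⁻¹ ≤ x'` is equivalent to the existence of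
`v ∈ W_J` with `y' ≤ yv` and `xv ≤ x'`. -/
theorem exists_u_iff_exists_v {B W : Type*} [Group W] [Finite W] {M : CoxeterMatrix B}
    (cs : CoxeterSystem M W) (J : Set B) (x x' y y' : W)
    (hx : isMinRep cs J x) (hx' : isMinRep cs J x') :
    (∃ u ∈ Subgroup.closure (cs.simple '' J),
        bruhatLE cs (y' * u) y ∧ bruhatLE cs (x * u⁻¹) x') ↔
    (∃ v ∈ Subgroup.closure (cs.simple '' J),
        bruhatLE cs y' (y * v) ∧ bruhatLE cs (x * v) x') := by
  constructor
  · rintro ⟨u, huc, h1, h2⟩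
    obtain ⟨l, hlJ, hl⟩ := (mem_closure_iff_word cs).mp (Subgroup.inv_mem _ huc)
    obtain ⟨ρ, hsub, hρred, hρπ⟩ := exists_reduced_sublist cs l
    have hρJ : ∀ b ∈ ρ, b ∈ J := fun b hb => hlJ b (hsub.subset hb)
    have hρu : cs.wordProd ρ = u⁻¹ := by rw [hρπ, hl]
    have hA : bruhatLE cs (y' * (cs.wordProd ρ)⁻¹) y := by
      rw [hρu, inv_inv]
      exact h1
    obtain ⟨ρ', hsub', hle'⟩ := claimA cs ρ y' y hA
    refine ⟨cs.wordProd ρ', wordProd_mem_closure cs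
      (fun b hb => hρJ b (hsub'.subset hb)), hle', ?_⟩
    have hmono := minRep_mul_mono cs hx hρred hρJ hsub'
    rw [hρu] at hmono
    exact bruhat_trans cs hmono h2
  · rintro ⟨v, hvc, h1, h2⟩
    obtain ⟨l, hlJ, hl⟩ := (mem_closure_iff_word cs).mp hvc
    obtain ⟨ρ, hsub, hρred, hρπ⟩ := exists_reduced_sublist cs l
    have hρJ : ∀ b ∈ ρ, b ∈ J := fun b hb => hlJ b (hsub.subset hb)
    have hρv : cs.wordProd ρ = v := by rw [hρπ, hl]
    have hB : bruhatLE cs y' (y * cs.wordProd ρ) := by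
      rw [hρv]
      exact h1
    obtain ⟨ρ', hsub', hle'⟩ := claimB cs ρ y' y hB
    refine ⟨(cs.wordProd ρ')⁻¹, Subgroup.inv_mem _ (wordProd_mem_closure cs
      (fun b hb => hρJ b (hsub'.subset hb))), hle', ?_⟩
    rw [inv_inv]
    have hmono := minRep_mul_mono cs hx hρred hρJ hsub'
    rw [hρv] at hmono
    exact bruhat_trans cs hmono h2
end

section
/- Define a relation ⪯ on W^J × W by (x', y') ⪯ (x, y) iff there exists u ∈ W_J with x'u ≤ x and y'u ≥ y. Then ⪯ is a partial order on W^J × W. -/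
/-- The relation `⪯` on `W^J × W`:
`(x', y') ⪯ (x, y)` iff there is `u ∈ W_J` with `x'u ≤ x` and `y'u ≥ y`. -/
def preceq {B W : Type*} [Group W] {M : CoxeterMatrix B} (cs : CoxeterSystem M W)
    (J : Set B) (p q : W × W) : Prop :=
  ∃ u ∈ Subgroup.closure (cs.simple '' J),
    bruhatLE cs (p.1 * u) q.1 ∧ bruhatLE cs q.2 (p.2 * u)

open List

namespace BruAux

variable {B W : Type*} [Group W] {M : CoxeterMatrix B} (cs : CoxeterSystem M W)

noncomputable local instance : DecidableEq W := Classical.decEq W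

local prefix:100 "σ" => cs.simple
local prefix:100 "π" => cs.wordProd
local prefix:100 "ℓ" => cs.length

lemma zmod2_add_self : ∀ e : ZMod 2, e + 1 + 1 = e := by decide

lemma ris_cons (i : B) (ω : List B) :
    cs.rightInvSeq (i :: ω) = ((π ω)⁻¹ * σ i * π ω) :: cs.rightInvSeq ω := rfl

/-- The parity permutation attached to a simple generator. -/
noncomputable def eta (i : B) : Equiv.Perm (W × ZMod 2) where
  toFun p := (σ i * p.1 * σ i, p.2 + if p.1 = σ i then 1 else 0)
  invFun p := (σ i * p.1 * σ i, p.2 + if p.1 = σ i then 1 else 0)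
  left_inv p := by
    obtain ⟨t, e⟩ := p
    by_cases h : t = σ i
    · subst h
      simp [cs.simple_mul_simple_cancel_left, cs.simple_mul_simple_self, zmod2_add_self]
    · have h2 : σ i * t * σ i ≠ σ i := by
        intro hc
        apply h
        have := congrArg (fun z => σ i * z * σ i) hc
        simpa [mul_assoc, cs.simple_mul_simple_cancel_left,
          cs.simple_mul_simple_cancel_right] using this
      simp only [if_neg h, if_neg h2, add_zero, Prod.mk.injEq]
      constructor
      · rw [← mul_assoc, ← mul_assoc, mul_assoc (σ i * σ i), cs.simple_mul_simple_self]
        simp [cs.simple_mul_simple_cancel_left]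
      · trivial
  right_inv p := by
    obtain ⟨t, e⟩ := p
    by_cases h : t = σ i
    · subst h
      simp [cs.simple_mul_simple_cancel_left, cs.simple_mul_simple_self, zmod2_add_self]
    · have h2 : σ i * t * σ i ≠ σ i := by
        intro hc
        apply h
        have := congrArg (fun z => σ i * z * σ i) hc
        simpa [mul_assoc, cs.simple_mul_simple_cancel_left,
          cs.simple_mul_simple_cancel_right] using this
      simp only [if_neg h, if_neg h2, add_zero, Prod.mk.injEq]
      constructor
      · rw [← mul_assoc, ← mul_assoc, mul_assoc (σ i * σ i), cs.simple_mul_simple_self]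
        simp [cs.simple_mul_simple_cancel_left]
      · trivial

lemma eta_apply (i : B) (p : W × ZMod 2) :
    eta cs i p = (σ i * p.1 * σ i, p.2 + if p.1 = σ i then 1 else 0) := rfl

lemma prod_map_eta_apply (ω : List B) (t : W) (e : ZMod 2) :
    (List.prod (ω.map (eta cs))) (t, e) =
      (π ω * t * (π ω)⁻¹, e + ((cs.rightInvSeq ω).count t : ZMod 2)) := by
  induction ω generalizing e with
  | nil => simp
  | cons i ω ih =>
    rw [map_cons, prod_cons, Equiv.Perm.mul_apply, ih, eta_apply, ris_cons]
    have hiff : (π ω * t * (π ω)⁻¹ = σ i) ↔ ((π ω)⁻¹ * σ i * π ω = t) := by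
      constructor
      · intro h; rw [← h]; group
      · intro h; rw [← h]; group
    rw [count_cons]
    simp only [beq_iff_eq]
    by_cases h : (π ω)⁻¹ * σ i * π ω = t
    · rw [if_pos (hiff.mpr h), if_pos h, cs.wordProd_cons]
      simp only [Prod.mk.injEq]
      constructor
      · group
        congr 1
        rw [zpow_neg, zpow_one, cs.inv_simple]
      · push_cast; ring
    · rw [if_neg (fun hc => h (hiff.mp hc)), if_neg h, cs.wordProd_cons]
      simp only [Prod.mk.injEq]
      constructor
      · group
        congr 1
        rw [zpow_neg, zpow_one, cs.inv_simple]
      · push_cast; ring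


lemma simple_conj_pow (i j : B) (a : ℕ) :
    σ j * (σ i * σ j) ^ a * σ j = ((σ i * σ j) ^ a)⁻¹ := by
  have h1 : σ j * (σ i * σ j) * (σ j)⁻¹ = (σ i * σ j)⁻¹ := by
    rw [cs.inv_simple, mul_inv_rev, cs.inv_simple, cs.inv_simple]
    rw [mul_assoc, mul_assoc, cs.simple_mul_simple_self, mul_one]
  calc σ j * (σ i * σ j) ^ a * σ j = σ j * (σ i * σ j) ^ a * (σ j)⁻¹ := by
        rw [cs.inv_simple]
    _ = (σ j * (σ i * σ j) * (σ j)⁻¹) ^ a := by rw [conj_pow]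
    _ = ((σ i * σ j)⁻¹) ^ a := by rw [h1]
    _ = ((σ i * σ j) ^ a)⁻¹ := by rw [inv_pow]

lemma pow_mul_simple (i j : B) (a : ℕ) :
    (σ i * σ j) ^ a * σ j = σ j * ((σ i * σ j) ^ a)⁻¹ := by
  have := simple_conj_pow cs i j a
  calc (σ i * σ j) ^ a * σ j = σ j * (σ j * (σ i * σ j) ^ a * σ j) := by
        rw [← mul_assoc, ← mul_assoc, cs.simple_mul_simple_self, one_mul]
    _ = σ j * ((σ i * σ j) ^ a)⁻¹ := by rw [this]

lemma ris_alternatingWord_getD (i j : B) :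
    ∀ N k : ℕ, k < N →
      (cs.rightInvSeq (CoxeterSystem.alternatingWord i j N)).getD k 1
        = σ j * (σ i * σ j) ^ (N - 1 - k) := by
  intro N
  induction N with
  | zero => omega
  | succ N ih =>
    intro k hk
    rw [CoxeterSystem.alternatingWord_succ', ris_cons]
    match k with
    | Nat.succ k' =>
      rw [List.getD_cons_succ, ih k' (by omega)]
      congr 2
      omega
    | 0 =>
      rw [List.getD_cons_zero]
      simp only [Nat.add_sub_cancel, Nat.sub_zero]
      rw [cs.prod_alternatingWord_eq_mul_pow]
      have e1 : ∀ a : ℕ, ((σ i * σ j) ^ a)⁻¹ * σ j = σ j * (σ i * σ j) ^ a := by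
        intro a
        rw [← simple_conj_pow cs i j a, mul_assoc, mul_assoc, cs.simple_mul_simple_self,
          mul_one]
      rcases Nat.even_or_odd N with hN | hN
      · rw [if_pos hN, if_pos hN, one_mul]
        obtain ⟨a, rfl⟩ := hN
        have h2 : (a + a) / 2 = a := by omega
        rw [h2, e1 a, mul_assoc, ← pow_add]
      · rw [if_neg (by simpa using hN), if_neg (by simpa using hN)]
        obtain ⟨a, rfl⟩ := hN
        have h2 : (2 * a + 1) / 2 = a := by omega
        rw [h2, mul_inv_rev, cs.inv_simple]
        have hmid : σ i * (σ j * (σ i * σ j) ^ a) = (σ i * σ j) ^ (a + 1) := by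
          rw [← mul_assoc, ← pow_succ']
        calc ((σ i * σ j) ^ a)⁻¹ * σ j * σ i * (σ j * (σ i * σ j) ^ a)
            = ((σ i * σ j) ^ a)⁻¹ * σ j * (σ i * (σ j * (σ i * σ j) ^ a)) := by
              rw [mul_assoc]
          _ = σ j * (σ i * σ j) ^ a * (σ i * σ j) ^ (a + 1) := by rw [e1 a, hmid]
          _ = σ j * (σ i * σ j) ^ (2 * a + 1) := by
              rw [mul_assoc, ← pow_add]
              congr 2
              omega

lemma count_ris_alt_even (i j : B) (t : W) :
    Even ((cs.rightInvSeq (CoxeterSystem.alternatingWord i j (2 * M i j))).count t) := by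
  set m := M i j with hm
  set L := cs.rightInvSeq (CoxeterSystem.alternatingWord i j (2 * m)) with hL
  have hlen : L.length = 2 * m := by
    rw [hL, CoxeterSystem.length_rightInvSeq, CoxeterSystem.length_alternatingWord]
  have htd : L.take m = L.drop m := by
    apply List.ext_getElem
    · simp [hlen]; omega
    · intro k h1 h2
      have hk : k < m := by simp [hlen] at h1; omega
      rw [List.getElem_take, List.getElem_drop]
      have e1 : L[k] = L.getD k 1 := by rw [List.getD_eq_getElem _ _ (by omega)]
      have e2 : L[m + k] = L.getD (m + k) 1 := by rw [List.getD_eq_getElem _ _ (by omega)]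
      rw [e1, e2, hL, ris_alternatingWord_getD cs i j (2 * m) k (by omega),
        ris_alternatingWord_getD cs i j (2 * m) (m + k) (by omega)]
      have harith : 2 * m - 1 - k = (m - 1 - k) + m := by omega
      rw [show 2 * m - 1 - (m + k) = m - 1 - k by omega, harith, pow_add, hm,
        cs.simple_mul_simple_pow i j, mul_one]
  have hsplit : L = L.take m ++ L.drop m := (List.take_append_drop m L).symm
  rw [show L.count t = (L.take m ++ L.drop m).count t by rw [← hsplit]]
  rw [List.count_append, htd]
  exact ⟨(L.drop m).count t, rfl⟩

lemma eta_liftable : M.IsLiftable (eta cs) := by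
  intro i j
  have hword : ∀ m : ℕ, (eta cs i * eta cs j) ^ m
      = ((CoxeterSystem.alternatingWord i j (2 * m)).map (eta cs)).prod := by
    intro m
    induction m with
    | zero => simp [CoxeterSystem.alternatingWord]
    | succ m ihm =>
      have h1 : CoxeterSystem.alternatingWord i j (2 * (m + 1))
          = i :: j :: CoxeterSystem.alternatingWord i j (2 * m) := by
        rw [show 2 * (m + 1) = (2 * m + 1) + 1 by omega,
          CoxeterSystem.alternatingWord_succ', CoxeterSystem.alternatingWord_succ']
        simp [Nat.even_add_one, parity_simps]
      rw [h1, List.map_cons, List.map_cons, List.prod_cons, List.prod_cons, ← ihm, pow_succ',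
        mul_assoc]
  rw [hword]
  apply Equiv.ext
  rintro ⟨t, e⟩
  rw [prod_map_eta_apply]
  have hπ : π (CoxeterSystem.alternatingWord i j (2 * M i j)) = 1 := by
    rw [cs.prod_alternatingWord_eq_mul_pow, if_pos ⟨M i j, by omega⟩, one_mul,
      show 2 * M i j / 2 = M i j by omega, cs.simple_mul_simple_pow i j]
  obtain ⟨c, hc⟩ := count_ris_alt_even cs i j t
  rw [hπ, hc]
  have hz : ((c + c : ℕ) : ZMod 2) = 0 := by
    push_cast
    rw [← two_mul, show (2 : ZMod 2) = 0 from rfl, zero_mul]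
  rw [hz, add_zero]
  simp

/-- The parity representation of the Coxeter group. -/
noncomputable def brHom : W →* Equiv.Perm (W × ZMod 2) :=
  cs.lift ⟨eta cs, eta_liftable cs⟩

lemma brHom_wordProd (ψ : List B) : brHom cs (π ψ) = (ψ.map (eta cs)).prod := by
  unfold CoxeterSystem.wordProd
  rw [map_list_prod, List.map_map]
  congr 1
  apply List.map_congr_left
  intro i _
  exact cs.lift_apply_simple (eta_liftable cs) i

lemma count_ris_parity {ω ω' : List B} (h : π ω = π ω') (t : W) :
    ((cs.rightInvSeq ω).count t : ZMod 2) = (cs.rightInvSeq ω').count t := by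
  have h1 := brHom_wordProd cs ω
  have h2 := brHom_wordProd cs ω'
  have h3 : (ω.map (eta cs)).prod = (ω'.map (eta cs)).prod := by rw [← h1, ← h2, h]
  have h4 := congrArg (fun f : Equiv.Perm (W × ZMod 2) => f (t, 0)) h3
  simp only [prod_map_eta_apply] at h4
  have := congrArg Prod.snd h4
  simpa using this

lemma ris_append (ω ω' : List B) :
    cs.rightInvSeq (ω ++ ω')
      = (cs.rightInvSeq ω).map (fun r => (π ω')⁻¹ * r * π ω') ++ cs.rightInvSeq ω' := by
  induction ω with
  | nil => simp
  | cons a ω ih =>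
    rw [List.cons_append, ris_cons, ih, ris_cons, List.map_cons, List.cons_append]
    congr 1
    rw [cs.wordProd_append, mul_inv_rev]
    group

lemma lis_eq_map_conj (ω : List B) :
    cs.leftInvSeq ω = (cs.rightInvSeq ω).map (fun r => π ω * r * (π ω)⁻¹) := by
  induction ω with
  | nil => simp
  | cons a ω ih =>
    show σ a :: List.map (MulAut.conj (σ a)) (cs.leftInvSeq ω) = _
    rw [ris_cons, List.map_cons, ih, List.map_map]
    congr 1
    · rw [cs.wordProd_cons, mul_inv_rev, cs.inv_simple]
      simp [mul_assoc, cs.simple_mul_simple_cancel_left, cs.simple_mul_simple_cancel_right,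
        inv_mul_cancel_left, mul_inv_cancel_left]
    · apply List.map_congr_left
      intro r _
      simp only [Function.comp_apply, MulAut.conj_apply, cs.wordProd_cons, mul_inv_rev,
        cs.inv_simple, mul_assoc]

lemma exists_odd_word {t : W} (ht : cs.IsReflection t) :
    ∃ ν : List B, π ν = t ∧ (cs.rightInvSeq ν).count t % 2 = 1 := by
  obtain ⟨w, i, rfl⟩ := ht
  obtain ⟨ρ, hρ⟩ := cs.wordProd_surjective w
  refine ⟨ρ ++ ([i] ++ ρ.reverse), ?_, ?_⟩
  · rw [cs.wordProd_append, cs.wordProd_append, cs.wordProd_singleton, cs.wordProd_reverse, hρ,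
      mul_assoc]
  · rw [ris_append, ris_append, CoxeterSystem.rightInvSeq_singleton,
      CoxeterSystem.rightInvSeq_reverse]
    rw [List.count_append, List.count_append]
    have hπ1 : π ([i] ++ ρ.reverse) = σ i * w⁻¹ := by
      rw [cs.wordProd_append, cs.wordProd_singleton, cs.wordProd_reverse, hρ]
    have hinj1 : Function.Injective (fun r : W => (π ([i] ++ ρ.reverse))⁻¹ * r * π ([i] ++ ρ.reverse)) := by
      intro x y hxy
      simpa using mul_left_cancel (mul_right_cancel hxy)
    have c1 : ((cs.rightInvSeq ρ).map
        (fun r => (π ([i] ++ ρ.reverse))⁻¹ * r * π ([i] ++ ρ.reverse))).count (w * σ i * w⁻¹)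
        = (cs.rightInvSeq ρ).count (σ i) := by
      have hval : (π ([i] ++ ρ.reverse))⁻¹ * (σ i) * π ([i] ++ ρ.reverse) = w * σ i * w⁻¹ := by
        rw [hπ1, mul_inv_rev, cs.inv_simple, inv_inv]
        simp [mul_assoc, cs.simple_mul_simple_cancel_left]
      rw [← hval]
      exact List.count_map_of_injective _ _ hinj1 _
    have c2 : (List.map (fun r => (π ρ.reverse)⁻¹ * r * π ρ.reverse) [σ i]).count (w * σ i * w⁻¹)
        = 1 := by
      rw [cs.wordProd_reverse, hρ, inv_inv]
      simp
    have c3 : ((cs.leftInvSeq ρ).reverse).count (w * σ i * w⁻¹) = (cs.rightInvSeq ρ).count (σ i) := by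
      rw [List.count_reverse, lis_eq_map_conj, hρ]
      have hval : w * (σ i) * w⁻¹ = w * (σ i) * w⁻¹ := rfl
      have hinj2 : Function.Injective (fun r : W => w * r * w⁻¹) := by
        intro x y hxy
        simpa using mul_left_cancel (mul_right_cancel hxy)
      exact List.count_map_of_injective _ _ hinj2 _
    rw [c1, c2, c3]
    omega

theorem strong_exchange (ω : List B) {t : W} (ht : cs.IsReflection t)
    (hlt : ℓ (π ω * t) < ℓ (π ω)) : t ∈ cs.rightInvSeq ω := by
  obtain ⟨μ, hμred, hμ⟩ := cs.exists_reduced_word' (π ω * t)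
  obtain ⟨ν, hνp, hνodd⟩ := exists_odd_word cs ht
  have htt : t * t = 1 := ht.mul_self
  have hπeq : π ω = π (μ ++ ν) := by
    rw [cs.wordProd_append, ← hμ, hνp, mul_assoc, htt, mul_one]
  have hcount := count_ris_parity cs hπeq t
  have hμ0 : (cs.rightInvSeq μ).count t = 0 := by
    rw [List.count_eq_zero]
    intro hmem
    have hinv := cs.isRightInversion_of_mem_rightInvSeq hμred hmem
    rw [← hμ] at hinv
    have : ℓ (π ω * t * t) < ℓ (π ω * t) := hinv.2
    rw [mul_assoc, htt, mul_one] at this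
    omega
  have hsplit : (cs.rightInvSeq (μ ++ ν)).count t
      = (cs.rightInvSeq μ).count t + (cs.rightInvSeq ν).count t := by
    rw [ris_append, List.count_append]
    congr 1
    have hval : (π ν)⁻¹ * t * π ν = t := by
      rw [hνp]
      rw [show t⁻¹ * t * t = t by rw [inv_mul_cancel, one_mul]]
    have hinj : Function.Injective (fun r : W => (π ν)⁻¹ * r * π ν) := by
      intro x y hxy
      simpa using mul_left_cancel (mul_right_cancel hxy)
    conv_lhs => rw [← hval]
    exact List.count_map_of_injective _ _ hinj _
  have hoddω : (cs.rightInvSeq ω).count t % 2 = 1 := by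
    have := (ZMod.natCast_eq_natCast_iff _ _ _).mp hcount
    unfold Nat.ModEq at this
    rw [this, hsplit, hμ0, zero_add]
    exact hνodd
  have : (cs.rightInvSeq ω).count t ≠ 0 := by omega
  exact List.count_pos_iff.mp (by omega)

theorem exists_eraseIdx_of_lt (ω : List B) {t : W} (ht : cs.IsReflection t)
    (hlt : ℓ (π ω * t) < ℓ (π ω)) :
    ∃ j, j < ω.length ∧ π ω * t = π (ω.eraseIdx j) := by
  have hmem := strong_exchange cs ω ht hlt
  obtain ⟨j, hj, hjt⟩ := List.mem_iff_getElem.mp hmem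
  have hj' : j < ω.length := by simpa using hj
  refine ⟨j, hj', ?_⟩
  have := cs.wordProd_mul_getD_rightInvSeq ω j
  rw [List.getD_eq_getElem _ _ hj, hjt] at this
  exact this


/-! ### Word shortening and the chain characterization of Bruhat order -/

lemma isReduced_nil : cs.IsReduced ([] : List B) := by
  simp [CoxeterSystem.IsReduced]

def brStep (a b : W) : Prop := ∃ t : W, cs.IsReflection t ∧ b = a * t ∧ ℓ a < ℓ b

def brLE (a b : W) : Prop := Relation.ReflTransGen (brStep cs) a b

lemma brLE_length_le {a b : W} (h : brLE cs a b) : ℓ a ≤ ℓ b := by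
  induction h with
  | refl => exact le_rfl
  | tail _ hstep ih =>
    obtain ⟨t, _, _, hlt⟩ := hstep
    omega

lemma exists_reduced_sublist : ∀ n : ℕ, ∀ ω : List B, ω.length ≤ n →
    ∃ ω', ω'.Sublist ω ∧ cs.IsReduced ω' ∧ π ω' = π ω := by
  intro n
  induction n with
  | zero =>
    intro ω hlen
    have : ω = [] := List.eq_nil_of_length_eq_zero (by omega)
    subst this
    exact ⟨[], List.Sublist.refl _, isReduced_nil cs, rfl⟩
  | succ n ih =>
    intro ω hlen
    by_cases hred : cs.IsReduced ω
    · exact ⟨ω, List.Sublist.refl _, hred, rfl⟩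
    · haveI : DecidablePred (fun k => ¬ cs.IsReduced (ω.take k)) :=
        fun _ => Classical.propDecidable _
      have hex : ∃ k, ¬ cs.IsReduced (ω.take k) :=
        ⟨ω.length, by rwa [List.take_length]⟩
      set k₀ := Nat.find hex with hk₀
      have hk₀spec : ¬ cs.IsReduced (ω.take k₀) := Nat.find_spec hex
      have hk₀pos : 0 < k₀ := by
        rcases Nat.eq_zero_or_pos k₀ with h0 | h0
        · exfalso; apply hk₀spec; rw [h0]; simpa using isReduced_nil cs
        · exact h0
      set k := k₀ - 1 with hk
      have hred₀ : cs.IsReduced (ω.take k) := by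
        have := Nat.find_min hex (m := k) (by omega)
        exact not_not.mp this
      have hkk : k + 1 = k₀ := by omega
      have hklen : k < ω.length := by
        by_contra hcon
        push_neg at hcon
        apply hk₀spec
        rw [show ω.take k₀ = ω from List.take_of_length_le (by omega)] at *
        ·
          have : ω.take k = ω := List.take_of_length_le (by omega)
          rwa [this] at hred₀
      have htake : ω.take (k + 1) = ω.take k ++ [ω[k]] := by
        rw [List.take_succ, List.getElem?_eq_getElem hklen]
        rfl
      have hπtake : π (ω.take (k + 1)) = π (ω.take k) * σ (ω[k]) := by
        rw [htake, cs.wordProd_append, cs.wordProd_singleton]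
      have hnotred : ¬ cs.IsReduced (ω.take (k+1)) := by rwa [hkk]
      have hlen₀ : ℓ (π (ω.take k)) = k := by
        have := hred₀
        unfold CoxeterSystem.IsReduced at this
        rwa [List.length_take, min_eq_left (by omega)] at this
      have hdrop : ℓ (π (ω.take k) * σ (ω[k])) < ℓ (π (ω.take k)) := by
        rcases cs.length_mul_simple (π (ω.take k)) (ω[k]) with h | h
        · exfalso
          apply hnotred
          unfold CoxeterSystem.IsReduced
          rw [hπtake, h, hlen₀, List.length_take, min_eq_left (by omega)]
        · omega
      obtain ⟨j, hj, hjer⟩ := exists_eraseIdx_of_lt cs (ω.take k)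
        (cs.isReflection_simple (ω[k])) hdrop
      set ω'' := (ω.take k).eraseIdx j ++ ω.drop (k+1) with hω''
      have hπ'' : π ω'' = π ω := by
        rw [hω'', cs.wordProd_append, ← hjer, ← hπtake, ← cs.wordProd_append,
          List.take_append_drop]
      have hsub'' : ω''.Sublist ω := by
        calc ω'' <+ ω.take (k+1) ++ ω.drop (k+1) := by
              apply List.Sublist.append _ (List.Sublist.refl _)
              calc (ω.take k).eraseIdx j <+ ω.take k := List.eraseIdx_sublist _ _
                _ <+ ω.take (k+1) := by rw [htake]; exact List.sublist_append_left _ _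
          _ = ω := List.take_append_drop _ _
      have hlen'' : ω''.length ≤ n := by
        have h1 : ((ω.take k).eraseIdx j).length + 1 = (ω.take k).length :=
          List.length_eraseIdx_add_one hj
        have h2 : (ω.take k).length = k := by rw [List.length_take]; omega
        have h3 : (ω.drop (k+1)).length = ω.length - (k+1) := by rw [List.length_drop]
        rw [hω'', List.length_append]
        omega
      obtain ⟨ω', hs, hr, hp⟩ := ih ω'' hlen''
      exact ⟨ω', hs.trans hsub'', hr, by rw [hp, hπ'']⟩

lemma sublist_of_brLE : ∀ n : ℕ, ∀ ω : List B, ω.length ≤ n → ∀ u, brLE cs u (π ω) →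
    ∃ ω', ω'.Sublist ω ∧ cs.IsReduced ω' ∧ π ω' = u := by
  intro n
  induction n with
  | zero =>
    intro ω hlen u h
    have hω : ω = [] := List.eq_nil_of_length_eq_zero (by omega)
    subst hω
    have h1 : ℓ u ≤ 0 := by
      have := brLE_length_le cs h
      simpa using this
    have : u = 1 := cs.length_eq_zero_iff.mp (by omega)
    exact ⟨[], List.Sublist.refl _, isReduced_nil cs, by simp [this]⟩
  | succ n ih =>
    intro ω hlen u h
    rcases Relation.ReflTransGen.cases_tail h with heq | ⟨c, hc, hstep⟩
    · obtain ⟨ω', hs, hr, hp⟩ := exists_reduced_sublist cs (n+1) ω hlen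
      exact ⟨ω', hs, hr, by rw [hp, heq]⟩
    · obtain ⟨t, ht, hbt, hlt⟩ := hstep
      have htt : t * t = 1 := ht.mul_self
      have hct : π ω * t = c := by rw [hbt, mul_assoc, htt, mul_one]
      have hlt2 : ℓ (π ω * t) < ℓ (π ω) := by rw [hct]; exact hlt
      obtain ⟨j, hj, hjer⟩ := exists_eraseIdx_of_lt cs ω ht hlt2
      have hcer : c = π (ω.eraseIdx j) := by rw [← hct, hjer]
      have hlener : (ω.eraseIdx j).length ≤ n := by
        have := List.length_eraseIdx_add_one hj
        omega
      obtain ⟨ω', hs, hr, hp⟩ := ih (ω.eraseIdx j) hlener u (by rwa [← hcer])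
      exact ⟨ω', hs.trans (List.eraseIdx_sublist _ _), hr, hp⟩

/-- Joint induction: subword implies chain, and the lifting property. -/
theorem chain_and_lifting : ∀ n : ℕ,
    (∀ ω : List B, cs.IsReduced ω → ω.length ≤ n → ∀ ω', ω'.Sublist ω →
      brLE cs (π ω') (π ω)) ∧
    (∀ v : W, ℓ v ≤ n → ∀ u, brLE cs u v → ∀ i : B,
      brLE cs (u * σ i) v ∨ brLE cs (u * σ i) (v * σ i)) := by
  intro n
  induction n using Nat.strong_induction_on with
  | _ n ihn =>
  constructor
  · -- subword implies chain
    intro ω hred hlen ω' hsub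
    rcases List.eq_nil_or_concat ω with rfl | ⟨ω₀, j, rfl⟩
    · have : ω' = [] := List.sublist_nil.mp hsub
      subst this
      exact Relation.ReflTransGen.refl
    · simp only [List.concat_eq_append] at hred hlen hsub ⊢
      have hn1 : 1 ≤ n := by
        have := hlen
        simp at this
        omega
      have hred₀ : cs.IsReduced ω₀ := by
        have := CoxeterSystem.IsReduced.take hred ω₀.length
        rwa [List.take_left] at this
      have hlen₀ : ω₀.length ≤ n - 1 := by
        have := hlen
        simp at this
        omega
      have hπω : π (ω₀ ++ [j]) = π ω₀ * σ j := by
        rw [cs.wordProd_append, cs.wordProd_singleton]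
      have hl₀ : ℓ (π ω₀) = ω₀.length := hred₀
      have hlω : ℓ (π (ω₀ ++ [j])) = ω₀.length + 1 := by
        have := hred
        unfold CoxeterSystem.IsReduced at this
        rwa [List.length_append, List.length_singleton] at this
      have hstep : brStep cs (π ω₀) (π (ω₀ ++ [j])) :=
        ⟨σ j, cs.isReflection_simple j, by rw [hπω], by omega⟩
      obtain ⟨l₁, l₂, rfl, hs₁, hs₂⟩ := List.sublist_append_iff.mp hsub
      have hl₂ : l₂ = [] ∨ l₂ = [j] := by
        cases hs₂ with
        | cons _ h => left; exact List.sublist_nil.mp h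
        | cons_cons _ h => right; rw [List.sublist_nil.mp h]
      rcases hl₂ with rfl | rfl
      · rw [List.append_nil]
        have h1 := ((ihn (n-1) (by omega)).1) ω₀ hred₀ hlen₀ l₁ hs₁
        exact h1.tail hstep
      · have h1 := ((ihn (n-1) (by omega)).1) ω₀ hred₀ hlen₀ l₁ hs₁
        have h2 := ((ihn (n-1) (by omega)).2) (π ω₀) (by omega) (π l₁) h1 j
        rw [cs.wordProd_append, cs.wordProd_singleton]
        rcases h2 with h2 | h2
        · exact h2.tail hstep
        · rwa [← hπω] at h2
  · -- lifting
    intro v hv u hle i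
    induction hle using Relation.ReflTransGen.head_induction_on with
    | refl =>
      right
      exact Relation.ReflTransGen.refl
    | head hstep hrest ihh =>
      rename_i a c
      have hlc : ℓ c ≤ ℓ v := brLE_length_le cs hrest
      obtain ⟨t, ht, hct, hlt⟩ := hstep
      have hSS : brLE cs (a * σ i) c ∨ brLE cs (a * σ i) (c * σ i) := by
        rcases cs.length_mul_simple a i with hai | hai
        · -- length goes up
          rcases cs.length_mul_simple c i with hci | hci
          · -- c * σ i also up : single step
            right
            apply Relation.ReflTransGen.single
            refine ⟨σ i * t * σ i, ?_, ?_, by omega⟩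
            · have := ht.conj (σ i)
              rwa [cs.inv_simple] at this
            · rw [hct]
              simp only [mul_assoc, cs.simple_mul_simple_cancel_left]
          · -- c * σ i goes down : exchange
            obtain ⟨μ, hμred, hμ⟩ := cs.exists_reduced_word' (c * σ i)
            have hπμi : π (μ ++ [i]) = c := by
              rw [cs.wordProd_append, cs.wordProd_singleton, ← hμ, mul_assoc,
                cs.simple_mul_simple_self, mul_one]
            have hμlen : μ.length = ℓ c - 1 := by
              have : ℓ (c * σ i) = μ.length := by rw [hμ]; exact hμred
              omega
            have hredμi : cs.IsReduced (μ ++ [i]) := by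
              unfold CoxeterSystem.IsReduced
              rw [hπμi, List.length_append, List.length_singleton]
              omega
            have hca : π (μ ++ [i]) * t = a := by
              rw [hπμi, hct, mul_assoc, ht.mul_self, mul_one]
            have hlta : ℓ (π (μ ++ [i]) * t) < ℓ (π (μ ++ [i])) := by
              rw [hca, hπμi]
              exact hlt
            obtain ⟨k, hk, hker⟩ := exists_eraseIdx_of_lt cs (μ ++ [i]) ht hlta
            rw [hca] at hker
            rcases Nat.lt_or_ge k μ.length with hkμ | hkμ
            · -- erase inside μ
              rw [List.eraseIdx_append_of_lt_length hkμ] at hker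
              have haσ : a * σ i = π (μ.eraseIdx k) := by
                rw [hker, cs.wordProd_append, cs.wordProd_singleton, mul_assoc,
                  cs.simple_mul_simple_self, mul_one]
              right
              rw [haσ, hμ]
              have hμn : μ.length ≤ n - 1 := by omega
              exact ((ihn (n-1) (by omega)).1) μ hμred hμn (μ.eraseIdx k)
                (List.eraseIdx_sublist _ _)
            · -- erase the last letter
              rw [List.eraseIdx_append_of_length_le hkμ] at hker
              have : k - μ.length = 0 := by
                have := hk
                rw [List.length_append, List.length_singleton] at this
                omega
              rw [this] at hker
              left
              have haeq : a = π μ := by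
                rw [hker]
                simp
              rw [haeq, ← hμ, mul_assoc, cs.simple_mul_simple_self, mul_one]
              exact Relation.ReflTransGen.refl
        · -- a * σ i goes down
          left
          have hstep2 : brStep cs (a * σ i) a :=
            ⟨σ i, cs.isReflection_simple i,
              by rw [mul_assoc, cs.simple_mul_simple_self, mul_one], by omega⟩
          exact (Relation.ReflTransGen.single ⟨t, ht, hct, hlt⟩).head hstep2
      rcases hSS with hSS | hSS
      · left
        exact hSS.trans hrest
      · rcases ihh with hi | hi
        · left; exact hSS.trans hi
        · right; exact hSS.trans hi


/-! ### Bruhat order basics -/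

lemma bruhatLE_iff_brLE {u v : W} : bruhatLE cs u v ↔ brLE cs u v := by
  constructor
  · rintro ⟨l, hred, hv, l', hsub, hu⟩
    have := (chain_and_lifting cs l.length).1 l hred le_rfl l' hsub
    rwa [hu, hv] at this
  · intro h
    obtain ⟨ω, hred, hv⟩ := cs.exists_reduced_word' v
    obtain ⟨ω', hsub, hred', hu⟩ := sublist_of_brLE cs ω.length ω le_rfl u (by rwa [← hv])
    exact ⟨ω, hred, hv.symm, ω', hsub, hu⟩

lemma bruhatLE_refl (v : W) : bruhatLE cs v v := by
  obtain ⟨ω, hred, hv⟩ := cs.exists_reduced_word' v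
  exact ⟨ω, hred, hv.symm, ω, List.Sublist.refl _, hv.symm⟩

lemma bruhatLE_trans {u v w : W} (h1 : bruhatLE cs u v) (h2 : bruhatLE cs v w) :
    bruhatLE cs u w := by
  rw [bruhatLE_iff_brLE] at *
  exact h1.trans h2

lemma bruhatLE_length_le {u v : W} (h : bruhatLE cs u v) : ℓ u ≤ ℓ v := by
  obtain ⟨l, hred, hv, l', hsub, hu⟩ := h
  calc ℓ u = ℓ (π l') := by rw [hu]
    _ ≤ l'.length := cs.length_wordProd_le l'
    _ ≤ l.length := hsub.length_le
    _ = ℓ v := by rw [← hv]; exact hred.symm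

lemma bruhatLE_antisymm {u v : W} (h : bruhatLE cs u v) (hlen : ℓ v ≤ ℓ u) : u = v := by
  obtain ⟨l, hred, hv, l', hsub, hu⟩ := h
  have h1 : ℓ u ≤ l'.length := by rw [← hu]; exact cs.length_wordProd_le l'
  have h2 : l.length = ℓ v := by rw [← hv]; exact hred.symm
  have h3 : l' = l := hsub.eq_of_length (by have := hsub.length_le; omega)
  rw [← hu, ← hv, h3]

lemma bruhatLE_mul_simple {u v : W} (h : bruhatLE cs u v) (i : B)
    (hlen : ℓ (v * σ i) = ℓ v + 1) : bruhatLE cs (u * σ i) (v * σ i) := by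
  obtain ⟨l, hred, hv, l', hsub, hu⟩ := h
  refine ⟨l ++ [i], ?_, ?_, l' ++ [i], hsub.append (List.Sublist.refl _), ?_⟩
  · unfold CoxeterSystem.IsReduced
    rw [cs.wordProd_append, cs.wordProd_singleton, hv, hlen, List.length_append,
      List.length_singleton]
    rw [← hv]
    exact congrArg (· + 1) hred
  · rw [cs.wordProd_append, cs.wordProd_singleton, hv]
  · rw [cs.wordProd_append, cs.wordProd_singleton, hu]

lemma bruhatLE_le_mul_simple {u v : W} (h : bruhatLE cs u v) (i : B)
    (hlen : ℓ (v * σ i) = ℓ v + 1) : bruhatLE cs u (v * σ i) := by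
  obtain ⟨l, hred, hv, l', hsub, hu⟩ := h
  refine ⟨l ++ [i], ?_, ?_, l', hsub.trans (List.sublist_append_left _ _), hu⟩
  · unfold CoxeterSystem.IsReduced
    rw [cs.wordProd_append, cs.wordProd_singleton, hv, hlen, List.length_append,
      List.length_singleton]
    rw [← hv]
    exact congrArg (· + 1) hred
  · rw [cs.wordProd_append, cs.wordProd_singleton, hv]

lemma bruhatLE_lifting {u v : W} (h : bruhatLE cs u v) (i : B) :
    bruhatLE cs (u * σ i) v ∨ bruhatLE cs (u * σ i) (v * σ i) := by
  rw [bruhatLE_iff_brLE] at h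
  rcases (chain_and_lifting cs (ℓ v)).2 v le_rfl u h i with h' | h'
  · left; rwa [bruhatLE_iff_brLE]
  · right; rwa [bruhatLE_iff_brLE]

/-! ### Parabolic subgroup facts -/

variable (J : Set B)

lemma mem_closure_iff {u : W} :
    u ∈ Subgroup.closure (cs.simple '' J) ↔ ∃ l : List B, (∀ b ∈ l, b ∈ J) ∧ π l = u := by
  constructor
  · intro h
    induction h using Subgroup.closure_induction with
    | mem x hx =>
      obtain ⟨i, hi, rfl⟩ := hx
      exact ⟨[i], by simpa using hi, cs.wordProd_singleton i⟩
    | one => exact ⟨[], by simp, cs.wordProd_nil⟩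
    | mul x y hx hy ihx ihy =>
      obtain ⟨l₁, h₁, rfl⟩ := ihx
      obtain ⟨l₂, h₂, rfl⟩ := ihy
      refine ⟨l₁ ++ l₂, ?_, cs.wordProd_append l₁ l₂⟩
      intro b hb
      rcases List.mem_append.mp hb with hb | hb
      · exact h₁ b hb
      · exact h₂ b hb
    | inv x hx ihx =>
      obtain ⟨l, hl, rfl⟩ := ihx
      exact ⟨l.reverse, fun b hb => hl b (List.mem_reverse.mp hb), cs.wordProd_reverse l⟩
  · rintro ⟨l, hl, rfl⟩
    induction l with
    | nil => simpa using one_mem _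
    | cons b l ihl =>
      rw [cs.wordProd_cons]
      refine mul_mem (Subgroup.subset_closure ⟨b, hl b (by simp), rfl⟩) ?_
      exact ihl (fun b' hb' => hl b' (by simp [hb']))

lemma exists_reduced_jword {u : W} (h : u ∈ Subgroup.closure (cs.simple '' J)) :
    ∃ l : List B, (∀ b ∈ l, b ∈ J) ∧ cs.IsReduced l ∧ π l = u := by
  obtain ⟨l, hl, hu⟩ := (mem_closure_iff cs J).mp h
  obtain ⟨l', hsub, hred, hp⟩ := exists_reduced_sublist cs l.length l le_rfl
  exact ⟨l', fun b hb => hl b (hsub.subset hb), hred, by rw [hp, hu]⟩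

lemma length_minRep_mul {x : W} (hx : isMinRep cs J x) :
    ∀ u ∈ Subgroup.closure (cs.simple '' J), ℓ (x * u) = ℓ x + ℓ u := by
  suffices H : ∀ n : ℕ, ∀ u ∈ Subgroup.closure (cs.simple '' J), ℓ u ≤ n →
      ℓ (x * u) = ℓ x + ℓ u by
    intro u hu
    exact H (ℓ u) u hu le_rfl
  intro n
  induction n with
  | zero =>
    intro u _ hu
    have : u = 1 := cs.length_eq_zero_iff.mp (by omega)
    simp [this]
  | succ n ih =>
    intro u hu hlu
    rcases Nat.lt_or_ge (ℓ u) (n + 1) with hlt | hge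
    · exact ih u hu (by omega)
    · have hlu' : ℓ u = n + 1 := by omega
      obtain ⟨l, hlJ, hlred, hlu2⟩ := exists_reduced_jword cs J hu
      have hllen : l.length = n + 1 := by
        have : ℓ (π l) = l.length := hlred
        rw [hlu2] at this
        omega
      rcases List.eq_nil_or_concat l with rfl | ⟨l₀, c, rfl⟩
      · simp at hllen
      · simp only [List.concat_eq_append] at hlJ hlred hlu2 hllen
        have hred₀ : cs.IsReduced l₀ := by
          have := CoxeterSystem.IsReduced.take hlred l₀.length
          rwa [List.take_left] at this
        have hl₀len : l₀.length = n := by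
          rw [List.length_append, List.length_singleton] at hllen
          omega
        set u₀ := π l₀ with hu₀
        have hcJ : c ∈ J := hlJ c (by simp)
        have hu₀mem : u₀ ∈ Subgroup.closure (cs.simple '' J) :=
          (mem_closure_iff cs J).mpr ⟨l₀, fun b hb => hlJ b (by simp [hb]), rfl⟩
        have hu₀len : ℓ u₀ = n := by rw [hu₀]; rw [← hl₀len]; exact hred₀
        have hu0 : u = u₀ * σ c := by
          rw [← hlu2, cs.wordProd_append, cs.wordProd_singleton]
        have ihlen : ℓ (x * u₀) = ℓ x + n := by
          rw [ih u₀ hu₀mem (by omega), hu₀len]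
        have hxu : x * u = (x * u₀) * σ c := by rw [hu0, mul_assoc]
        rcases cs.length_mul_simple (x * u₀) c with hup | hdown
        · rw [hxu, hup, ihlen, hlu']
          omega
        · exfalso
          obtain ⟨ξ, hξred, hξ⟩ := cs.exists_reduced_word' x
          set ζ := ξ ++ l₀ with hζ
          have hπζ : π ζ = x * u₀ := by rw [hζ, cs.wordProd_append, ← hξ]
          have hζred : cs.IsReduced ζ := by
            unfold CoxeterSystem.IsReduced
            rw [hπζ, ihlen, hζ, List.length_append]
            have h1 : ℓ x = ξ.length := hξred ▸ congrArg cs.length hξ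
            omega
          have hltζ : ℓ (π ζ * σ c) < ℓ (π ζ) := by
            rw [hπζ]
            omega
          obtain ⟨k, hk, hker⟩ := exists_eraseIdx_of_lt cs ζ (cs.isReflection_simple c) hltζ
          rw [hπζ] at hker
          rcases Nat.lt_or_ge k ξ.length with hkξ | hkξ
          · -- erase inside ξ : contradicts minimality of x
            rw [hζ, List.eraseIdx_append_of_lt_length hkξ] at hker
            have hw : x * (u₀ * σ c * u₀⁻¹) = π (ξ.eraseIdx k) := by
              have h0 : π (ξ.eraseIdx k ++ l₀) = π (ξ.eraseIdx k) * u₀ := by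
                rw [cs.wordProd_append]
              rw [h0] at hker
              have h5 : x * (u₀ * σ c * u₀⁻¹) = (x * u₀ * σ c) * u₀⁻¹ := by group
              rw [h5, hker]
              group
            have hwmem : u₀ * σ c * u₀⁻¹ ∈ Subgroup.closure (cs.simple '' J) :=
              mul_mem (mul_mem hu₀mem (Subgroup.subset_closure ⟨c, hcJ, rfl⟩))
                (inv_mem hu₀mem)
            have hmin := hx _ hwmem
            rw [hw] at hmin
            have h1 : ℓ (π (ξ.eraseIdx k)) ≤ (ξ.eraseIdx k).length :=
              cs.length_wordProd_le _
            have h2 : (ξ.eraseIdx k).length + 1 = ξ.length :=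
              List.length_eraseIdx_add_one hkξ
            have h3 : ℓ x = ξ.length := hξred ▸ congrArg cs.length hξ
            omega
          · -- erase inside l₀ : contradicts reducedness of word for u
            rw [hζ, List.eraseIdx_append_of_length_le hkξ] at hker
            have hkl : k - ξ.length < l₀.length := by
              have := hk
              rw [hζ, List.length_append] at this
              omega
            have hu' : u = π (l₀.eraseIdx (k - ξ.length)) := by
              have h6 : π (ξ ++ l₀.eraseIdx (k - ξ.length))
                  = x * π (l₀.eraseIdx (k - ξ.length)) := by
                rw [cs.wordProd_append, ← hξ]
              rw [h6] at hker
              apply mul_left_cancel (a := x)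
              rw [hu0, ← mul_assoc]
              exact hker
            have h1 : ℓ u ≤ (l₀.eraseIdx (k - ξ.length)).length := by
              rw [hu']
              exact cs.length_wordProd_le _
            have h2 : (l₀.eraseIdx (k - ξ.length)).length + 1 = l₀.length :=
              List.length_eraseIdx_add_one hkl
            omega

end BruAux

/-- The relation `⪯` is a partial order on `W^J × W`. -/
theorem preceq_partial_order {B W : Type*} [Group W] [Finite W] {M : CoxeterMatrix B}
    (cs : CoxeterSystem M W) (J : Set B) :
    (∀ p : W × W, isMinRep cs J p.1 → preceq cs J p p) ∧
    (∀ p q : W × W, isMinRep cs J p.1 → isMinRep cs J q.1 →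
      preceq cs J p q → preceq cs J q p → p = q) ∧
    (∀ p q r : W × W, isMinRep cs J p.1 → isMinRep cs J q.1 → isMinRep cs J r.1 →
      preceq cs J p q → preceq cs J q r → preceq cs J p r) := by
  refine ⟨?_, ?_, ?_⟩
  · -- reflexivity
    intro p _
    exact ⟨1, one_mem _, by simpa using BruAux.bruhatLE_refl cs p.1,
      by simpa using BruAux.bruhatLE_refl cs p.2⟩
  · -- antisymmetry
    rintro ⟨x₁, y₁⟩ ⟨x₂, y₂⟩ hp1 hq1 ⟨u, hu, h1, h2⟩ ⟨v, hv, h3, h4⟩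
    simp only at h1 h2 h3 h4 hp1 hq1 ⊢
    have e1 : cs.length (x₁ * u) = cs.length x₁ + cs.length u :=
      BruAux.length_minRep_mul cs J hp1 u hu
    have e2 : cs.length (x₂ * v) = cs.length x₂ + cs.length v :=
      BruAux.length_minRep_mul cs J hq1 v hv
    have l1 : cs.length (x₁ * u) ≤ cs.length x₂ := BruAux.bruhatLE_length_le cs h1
    have l2 : cs.length (x₂ * v) ≤ cs.length x₁ := BruAux.bruhatLE_length_le cs h3
    have hu0 : cs.length u = 0 := by omega
    have hv0 : cs.length v = 0 := by omega
    have hu1 : u = 1 := cs.length_eq_zero_iff.mp hu0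
    have hv1 : v = 1 := cs.length_eq_zero_iff.mp hv0
    subst hu1; subst hv1
    rw [mul_one] at h1 h2 h3 h4
    have hx : x₁ = x₂ := BruAux.bruhatLE_antisymm cs h1 (BruAux.bruhatLE_length_le cs h3)
    have hy : y₂ = y₁ := BruAux.bruhatLE_antisymm cs h2 (BruAux.bruhatLE_length_le cs h4)
    rw [Prod.mk.injEq]
    exact ⟨hx, hy.symm⟩
  · -- transitivity
    rintro ⟨x₁, y₁⟩ ⟨x₂, y₂⟩ ⟨x₃, y₃⟩ hp1 hq1 hr1 ⟨u, hu, h1, h2⟩ ⟨v, hv, h3, h4⟩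
    simp only at h1 h2 h3 h4 hp1 hq1 hr1 ⊢
    obtain ⟨l, hlJ, hlred, hlv⟩ := BruAux.exists_reduced_jword cs J hv
    have key : ∀ k : ℕ, k ≤ l.length → ∃ w ∈ Subgroup.closure (cs.simple '' J),
        bruhatLE cs (x₁ * w) (x₂ * cs.wordProd (l.take k)) ∧
        bruhatLE cs (y₂ * cs.wordProd (l.take k)) (y₁ * w) := by
      intro k
      induction k with
      | zero =>
        intro _
        exact ⟨u, hu, by simpa using h1, by simpa using h2⟩
      | succ k ihk =>
        intro hk1
        obtain ⟨w₀, hw₀, hA, hC⟩ := ihk (by omega)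
        have hkl : k < l.length := by omega
        have htake : l.take (k+1) = l.take k ++ [l[k]] := by
          rw [List.take_succ, List.getElem?_eq_getElem hkl]
          rfl
        have hcJ : l[k] ∈ J := hlJ _ (List.getElem_mem hkl)
        have htkmem : ∀ m : ℕ, cs.wordProd (l.take m) ∈ Subgroup.closure (cs.simple '' J) :=
          fun m => (BruAux.mem_closure_iff cs J).mpr
            ⟨l.take m, fun b hb => hlJ b (List.take_subset m l hb), rfl⟩
        have hredtk : ∀ m : ℕ, m ≤ l.length → cs.length (cs.wordProd (l.take m)) = m := by
          intro m hm
          have := CoxeterSystem.IsReduced.take hlred m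
          unfold CoxeterSystem.IsReduced at this
          rwa [List.length_take, min_eq_left hm] at this
        have hlen1 : cs.length (x₂ * cs.wordProd (l.take k))
            = cs.length x₂ + k := by
          rw [BruAux.length_minRep_mul cs J hq1 _ (htkmem k), hredtk k (by omega)]
        have hlen2 : cs.length (x₂ * cs.wordProd (l.take (k+1)))
            = cs.length x₂ + (k+1) := by
          rw [BruAux.length_minRep_mul cs J hq1 _ (htkmem (k+1)), hredtk (k+1) (by omega)]
        have hmulstep : x₂ * cs.wordProd (l.take (k+1))
            = (x₂ * cs.wordProd (l.take k)) * cs.simple l[k] := by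
          rw [htake, cs.wordProd_append, cs.wordProd_singleton, mul_assoc]
        have hup : cs.length ((x₂ * cs.wordProd (l.take k)) * cs.simple l[k])
            = cs.length (x₂ * cs.wordProd (l.take k)) + 1 := by
          rw [← hmulstep, hlen1, hlen2]
          omega
        have hystep : y₂ * cs.wordProd (l.take (k+1))
            = (y₂ * cs.wordProd (l.take k)) * cs.simple l[k] := by
          rw [htake, cs.wordProd_append, cs.wordProd_singleton, mul_assoc]
        rcases BruAux.bruhatLE_lifting cs hC l[k] with hy | hy
        · refine ⟨w₀, hw₀, ?_, ?_⟩
          · rw [hmulstep]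
            exact BruAux.bruhatLE_le_mul_simple cs hA l[k] hup
          · rw [hystep]
            exact hy
        · refine ⟨w₀ * cs.simple l[k],
            mul_mem hw₀ (Subgroup.subset_closure ⟨l[k], hcJ, rfl⟩), ?_, ?_⟩
          · rw [hmulstep, ← mul_assoc]
            exact BruAux.bruhatLE_mul_simple cs hA l[k] hup
          · rw [hystep, ← mul_assoc]
            exact hy
    obtain ⟨w, hw, hxw, hyw⟩ := key l.length le_rfl
    rw [List.take_length, hlv] at hxw hyw
    exact ⟨w, hw, BruAux.bruhatLE_trans cs hxw h3, BruAux.bruhatLE_trans cs h4 hyw⟩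
end

section
/- In a finite Weyl group W with longest element w_S, the equivariant localization coefficients satisfy d_{(x^σ)⁻¹, (y^σ)⁻¹} = w_S y⁻¹ · d_{x,y}, where w^σ = w_S w w_S denotes conjugation by the longest element, d_{v,w} = Σ β_{j₁}···β_{j_m} summed over subwords s_{i_{j₁}}···s_{i_{j_m}} of a fixed reduced word w = s_{i₁}···s_{i_p} that are reduced expressions for v, with β_j = s_{i₁}···s_{i_{j−1}} α_{i_j}, and the Weyl group acts naturally on the polynomial ring generated by the roots. -/
open scoped Classical

/-- The equivariant localization coefficient `d_{v,w}` computed with respect to a word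
`l` (intended to be a reduced word for `w`): the sum, over all subwords of `l` that are
reduced expressions for `v`, of the products `β_{j₁} ⋯ β_{j_m}`, where
`β_j = s_{i₁} ⋯ s_{i_{j−1}} α_{i_j}`.  Here `A` is the polynomial ring generated by the
roots, `act` the natural action of `W` on `A`, and `αr i` the simple root `α_i`. -/
noncomputable def dCoef {B W A : Type*} [Group W] [CommRing A] {M : CoxeterMatrix B}
    (cs : CoxeterSystem M W) (act : W →* RingAut A) (αr : B → A)
    (l : List B) (v : W) : A :=
  ((l.zipIdx.map Prod.swap).sublists.map (fun s =>
    if cs.wordProd (s.map Prod.snd) = v ∧ (s.map Prod.snd).length = cs.length v then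
      (s.map (fun p => act (cs.wordProd (l.take p.1)) (αr p.2))).prod
    else 0)).sum

namespace DCoefAux

open List

variable {B W : Type*} [Group W] {M : CoxeterMatrix B} (cs : CoxeterSystem M W)

local prefix:100 "σs" => cs.simple
local prefix:100 "π" => cs.wordProd
local prefix:100 "ℓ" => cs.length

/-- The basic flip map on `W × ℤˣ` associated to a simple reflection. -/
noncomputable def flipFun (i : B) : W × ℤˣ → W × ℤˣ :=
  fun p => (σs i * p.1 * σs i, if p.1 = σs i then -p.2 else p.2)

lemma conj_simple_eq_iff (i : B) (x : W) : (σs i * x * σs i = σs i) ↔ (x = σs i) := by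
  constructor
  · intro h
    calc x = σs i * (σs i * x * σs i) * σs i := by
            rw [← mul_assoc, ← mul_assoc, cs.simple_mul_simple_self, one_mul, mul_assoc,
              cs.simple_mul_simple_self, mul_one]
      _ = σs i := by rw [h, cs.simple_mul_simple_self, one_mul]
  · intro h
    rw [h, cs.simple_mul_simple_self, one_mul]

lemma flipFun_involutive (i : B) : Function.Involutive (flipFun cs i) := by
  rintro ⟨t, ε⟩
  unfold flipFun
  simp only
  have h1 : σs i * (σs i * t * σs i) * σs i = t := by
    rw [← mul_assoc, ← mul_assoc, cs.simple_mul_simple_self, one_mul, mul_assoc,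
      cs.simple_mul_simple_self, mul_one]
  by_cases hp : t = σs i
  · simp [hp, cs.simple_mul_simple_self, h1, conj_simple_eq_iff]
  · simp [hp, h1, conj_simple_eq_iff cs i t]

/-- The permutation of `W × ℤˣ` associated to a simple reflection. -/
noncomputable def flipPerm (i : B) : Equiv.Perm (W × ℤˣ) := (flipFun_involutive cs i).toPerm

lemma flipPerm_apply (i : B) (p : W × ℤˣ) : flipPerm cs i p = flipFun cs i p := rfl

/-- Product of flip permutations along a word. -/
noncomputable def lamProd (ω : List B) : Equiv.Perm (W × ℤˣ) := (ω.map (flipPerm cs)).prod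

@[simp] lemma lamProd_nil : lamProd cs [] = 1 := rfl

lemma lamProd_cons (i : B) (ω : List B) :
    lamProd cs (i :: ω) = flipPerm cs i * lamProd cs ω := by
  simp [lamProd]

lemma lamProd_append (ω ω' : List B) :
    lamProd cs (ω ++ ω') = lamProd cs ω * lamProd cs ω' := by
  simp [lamProd]

lemma rightInvSeq_cons' (i : B) (ω : List B) :
    cs.rightInvSeq (i :: ω) = ((π ω)⁻¹ * σs i * π ω) :: cs.rightInvSeq ω := rfl

/-- The key formula for the action of `lamProd`. -/
lemma lamProd_apply (ω : List B) (t : W) (ε : ℤˣ) :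
    lamProd cs ω (t, ε) =
      (π ω * t * (π ω)⁻¹, ε * (-1) ^ (count t (cs.rightInvSeq ω))) := by
  induction ω with
  | nil => simp
  | cons i ω ih =>
    rw [lamProd_cons, Equiv.Perm.mul_apply, ih, flipPerm_apply]
    unfold flipFun
    have hcond : (π ω * t * (π ω)⁻¹ = σs i) ↔ ((π ω)⁻¹ * σs i * π ω = t) := by
      constructor
      · intro h
        rw [← h]; group
      · intro h
        rw [← h]; group
    rw [rightInvSeq_cons', count_cons]
    simp only
    by_cases hc : (π ω)⁻¹ * σs i * π ω = t
    · rw [if_pos (hcond.mpr hc), if_pos (by simpa using hc)]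
      refine Prod.ext ?_ ?_
      · simp only [cs.wordProd_cons, mul_inv_rev, cs.inv_simple, mul_assoc]
      · simp only [pow_succ, ← mul_assoc, mul_neg_one, mul_neg, mul_one]
    · rw [if_neg (fun h => hc (hcond.mp h)), if_neg (by simpa using hc)]
      refine Prod.ext ?_ ?_
      · simp only [cs.wordProd_cons, mul_inv_rev, cs.inv_simple, mul_assoc]
      · simp


/-! ### Liftability -/

/-- The word `[i, j, i, j, ...]` of length `2 * m`. -/
def pairWord (i j : B) (m : ℕ) : List B := (List.replicate m [i, j]).flatten

@[simp] lemma pairWord_zero (i j : B) : pairWord i j 0 = [] := rfl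

lemma pairWord_succ (i j : B) (m : ℕ) :
    pairWord i j (m + 1) = i :: j :: pairWord i j m := rfl

lemma wordProd_pairWord (i j : B) (m : ℕ) :
    π (pairWord i j m) = (σs i * σs j) ^ m := by
  induction m with
  | zero => simp [cs.wordProd_nil]
  | succ m ih =>
    rw [pairWord_succ, cs.wordProd_cons, cs.wordProd_cons, ih, pow_succ']
    group

lemma lamProd_pairWord (i j : B) (m : ℕ) :
    lamProd cs (pairWord i j m) = (flipPerm cs i * flipPerm cs j) ^ m := by
  induction m with
  | zero => simp
  | succ m ih =>
    rw [pairWord_succ, lamProd_cons, lamProd_cons, ih, pow_succ']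
    group

lemma simple_zpow_conj (i j : B) (k : ℤ) :
    σs j * (σs i * σs j) ^ k * σs j = (σs i * σs j) ^ (-k) := by
  have h : σs j * (σs i * σs j) * (σs j)⁻¹ = ((σs i * σs j)⁻¹ : W) := by
    rw [cs.inv_simple, mul_inv_rev, cs.inv_simple, cs.inv_simple, ← mul_assoc,
      mul_assoc (σs j * σs i), cs.simple_mul_simple_self, mul_one]
  calc σs j * (σs i * σs j) ^ k * σs j
      = σs j * (σs i * σs j) ^ k * (σs j)⁻¹ := by rw [cs.inv_simple]
    _ = (σs j * (σs i * σs j) * (σs j)⁻¹) ^ k := by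
        rw [conj_zpow]
    _ = ((σs i * σs j)⁻¹) ^ k := by rw [h]
    _ = (σs i * σs j) ^ (-k) := by rw [zpow_neg, inv_zpow]

lemma rightInvSeq_pairWord (i j : B) (m : ℕ) :
    cs.rightInvSeq (pairWord i j m) =
      (List.range (2 * m)).map
        (fun k : ℕ => (σs i * σs j) ^ ((k : ℤ) + 1 - 2 * m) * σs j) := by
  have hji : σs j * σs i = (σs i * σs j)⁻¹ := by
    rw [mul_inv_rev, cs.inv_simple, cs.inv_simple]
  have hconj : σs j * (σs i * σs j) * (σs j)⁻¹ = (σs i * σs j)⁻¹ := by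
    rw [cs.inv_simple, show σs j * (σs i * σs j) * σs j = σs j * σs i * (σs j * σs j) by group,
      cs.simple_mul_simple_self, mul_one, hji]
  have hj : ∀ k : ℤ, σs j * (σs i * σs j) ^ k = (σs i * σs j) ^ (-k) * σs j := by
    intro k
    calc σs j * (σs i * σs j) ^ k
        = (σs j * (σs i * σs j) ^ k * (σs j)⁻¹) * σs j := by group
      _ = (σs j * (σs i * σs j) * (σs j)⁻¹) ^ k * σs j := by rw [conj_zpow]
      _ = ((σs i * σs j)⁻¹) ^ k * σs j := by rw [hconj]
      _ = (σs i * σs j) ^ (-k) * σs j := by rw [inv_zpow, zpow_neg]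
  induction m with
  | zero => simp
  | succ m ih =>
    have hπ : π (pairWord i j m) = (σs i * σs j) ^ (m : ℤ) := by
      rw [wordProd_pairWord, zpow_natCast]
    rw [pairWord_succ, rightInvSeq_cons', rightInvSeq_cons', ih, cs.wordProd_cons, hπ]
    have h2m : 2 * (m + 1) = 2 + 2 * m := by ring
    rw [h2m, List.range_add, List.map_append, show List.range 2 = [0, 1] from rfl]
    rw [List.map_map, List.map_cons, List.map_cons, List.map_nil]
    have e0 : (σs j * (σs i * σs j) ^ (m : ℤ))⁻¹ * σs i * (σs j * (σs i * σs j) ^ (m : ℤ))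
        = (σs i * σs j) ^ (((0:ℕ) : ℤ) + 1 - 2 * ((m + 1 : ℕ) : ℤ)) * σs j := by
      rw [mul_inv_rev, cs.inv_simple, ← zpow_neg]
      calc (σs i * σs j) ^ (-(m:ℤ)) * σs j * σs i * (σs j * (σs i * σs j) ^ (m:ℤ))
          = (σs i * σs j) ^ (-(m:ℤ)) * (σs j * σs i) * ((σs i * σs j) ^ (-(m:ℤ)) * σs j) := by
            rw [hj]; group
        _ = (σs i * σs j) ^ (-(m:ℤ)) * (σs i * σs j)⁻¹ * (σs i * σs j) ^ (-(m:ℤ)) * σs j := by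
            rw [hji]; group
        _ = (σs i * σs j) ^ (((0:ℕ) : ℤ) + 1 - 2 * ((m + 1 : ℕ) : ℤ)) * σs j := by
            rw [← zpow_neg_one, ← zpow_add, ← zpow_add]
            congr 1
            push_cast
            ring
    have e1 : ((σs i * σs j) ^ (m : ℤ))⁻¹ * σs j * (σs i * σs j) ^ (m : ℤ)
        = (σs i * σs j) ^ (((1:ℕ) : ℤ) + 1 - 2 * ((m + 1 : ℕ) : ℤ)) * σs j := by
      rw [← zpow_neg]
      calc (σs i * σs j) ^ (-(m:ℤ)) * σs j * (σs i * σs j) ^ (m:ℤ)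
          = (σs i * σs j) ^ (-(m:ℤ)) * ((σs i * σs j) ^ (-(m:ℤ)) * σs j) := by
            rw [mul_assoc, hj]
        _ = (σs i * σs j) ^ (((1:ℕ) : ℤ) + 1 - 2 * ((m + 1 : ℕ) : ℤ)) * σs j := by
            rw [← mul_assoc, ← zpow_add]
            congr 1
            push_cast
            ring
    rw [e0, e1]
    congr 1
    congr 1
    apply List.map_congr_left
    intro k _
    congr 1
    congr 1
    push_cast
    ring

lemma count_rightInvSeq_pairWord_even (i j : B) (m : ℕ)
    (h : (σs i * σs j) ^ (m : ℤ) = 1) (t : W) :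
    Even (count t (cs.rightInvSeq (pairWord i j m))) := by
  rw [rightInvSeq_pairWord]
  have h2 : 2 * m = m + m := by ring
  rw [h2, List.range_add, List.map_append, count_append, List.map_map]
  have hmap : (List.range m).map
        ((fun k : ℕ => (σs i * σs j) ^ ((k : ℤ) + 1 - 2 * m) * σs j) ∘ (fun x => m + x))
      = (List.range m).map (fun k : ℕ => (σs i * σs j) ^ ((k : ℤ) + 1 - 2 * m) * σs j) := by
    apply List.map_congr_left
    intro k _
    simp only [Function.comp_apply]
    have he : ((m + k : ℕ) : ℤ) + 1 - 2 * m = ((k : ℤ) + 1 - 2 * m) + m := by push_cast; ring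
    rw [he, zpow_add, h, mul_one]
  rw [hmap]
  exact ⟨_, rfl⟩

lemma liftable : M.IsLiftable (flipPerm cs) := by
  intro i j
  rw [← lamProd_pairWord]
  apply Equiv.ext
  rintro ⟨t, ε⟩
  rw [lamProd_apply]
  have hπ : π (pairWord i j (M i j)) = 1 := by
    rw [wordProd_pairWord]; exact cs.simple_mul_simple_pow i j
  have hz : (σs i * σs j) ^ ((M i j : ℕ) : ℤ) = 1 := by
    rw [zpow_natCast]; exact cs.simple_mul_simple_pow i j
  have heven := count_rightInvSeq_pairWord_even cs i j (M i j) hz t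
  rw [hπ, heven.neg_one_pow]
  simp [Equiv.Perm.one_apply]

/-! ### The sign cocycle η -/

/-- The lifted homomorphism `W →* Perm (W × ℤˣ)`. -/
noncomputable def rho : W →* Equiv.Perm (W × ℤˣ) := cs.lift ⟨flipPerm cs, liftable cs⟩

lemma rho_simple (i : B) : rho cs (σs i) = flipPerm cs i :=
  cs.lift_apply_simple (liftable cs) i

lemma rho_wordProd (ω : List B) : rho cs (π ω) = lamProd cs ω := by
  induction ω with
  | nil => simp [cs.wordProd_nil]
  | cons i ω ih => rw [cs.wordProd_cons, map_mul, ih, rho_simple, lamProd_cons]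

/-- The sign cocycle. -/
noncomputable def eta (w t : W) : ℤˣ := (rho cs w (t, 1)).2

lemma eta_eq_count (ω : List B) (t : W) :
    eta cs (π ω) t = (-1) ^ (count t (cs.rightInvSeq ω)) := by
  unfold eta
  rw [rho_wordProd, lamProd_apply]
  simp

lemma rho_apply (w t : W) (ε : ℤˣ) :
    rho cs w (t, ε) = (w * t * w⁻¹, ε * eta cs w t) := by
  obtain ⟨ω, -, rfl⟩ := cs.exists_reduced_word w
  rw [rho_wordProd, lamProd_apply, eta_eq_count]

lemma eta_mul (u v t : W) :
    eta cs (u * v) t = eta cs u (v * t * v⁻¹) * eta cs v t := by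
  unfold eta
  rw [map_mul, Equiv.Perm.mul_apply, rho_apply cs v t 1, rho_apply]
  rw [one_mul]
  exact mul_comm _ _

lemma eta_one (t : W) : eta cs 1 t = 1 := by
  unfold eta
  rw [map_one]
  rfl

lemma eta_simple_self (k : B) : eta cs (σs k) (σs k) = -1 := by
  have h : σs k = π [k] := by rw [cs.wordProd_cons, cs.wordProd_nil, mul_one]
  rw [h, eta_eq_count]
  rw [show cs.rightInvSeq [k] = [σs k] from by simp]
  rw [show π [k] = σs k from h.symm]
  simp

lemma eta_inv_mul_cancel (v t : W) : eta cs v⁻¹ (v * t * v⁻¹) * eta cs v t = 1 := by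
  have := eta_mul cs v⁻¹ v t
  rw [inv_mul_cancel, eta_one] at this
  exact this.symm

lemma eta_reflection_self {t : W} (ht : cs.IsReflection t) : eta cs t t = -1 := by
  obtain ⟨v, k, rfl⟩ := ht
  set t := v * σs k * v⁻¹ with hts
  have h1 : t = v * (σs k * v⁻¹) := by rw [hts, mul_assoc]
  have h2 : (σs k * v⁻¹) * t * (σs k * v⁻¹)⁻¹ = σs k := by
    rw [hts, mul_inv_rev, cs.inv_simple, inv_inv]
    simp [mul_assoc, inv_mul_cancel_left, cs.simple_mul_simple_cancel_left]
  have h3 : v⁻¹ * t * v = σs k := by rw [hts]; group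
  calc eta cs t t = eta cs (v * (σs k * v⁻¹)) t := by rw [← h1]
    _ = eta cs v ((σs k * v⁻¹) * t * (σs k * v⁻¹)⁻¹) * eta cs (σs k * v⁻¹) t := by
        rw [eta_mul]
    _ = eta cs v (σs k) * (eta cs (σs k) (v⁻¹ * t * (v⁻¹)⁻¹) * eta cs v⁻¹ t) := by
        rw [h2, eta_mul]
    _ = eta cs v (σs k) * ((-1) * eta cs v⁻¹ t) := by
        rw [inv_inv, h3, eta_simple_self]
    _ = (-1) * (eta cs v⁻¹ t * eta cs v (σs k)) := by
        rw [mul_comm (eta cs v (σs k)), mul_assoc]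
    _ = (-1) * (eta cs v⁻¹ (v * σs k * v⁻¹) * eta cs v (σs k)) := by rw [← hts]
    _ = -1 := by rw [eta_inv_mul_cancel, mul_one]


lemma eta_eq_neg_one_of_isRightInversion {w t : W} (h : cs.IsRightInversion w t)
    (hmp : ∀ u, eta cs u t = -1 → cs.IsRightInversion u t) : eta cs w t = -1 := by
  obtain ⟨ht, hlt⟩ := h
  have hw : w = (w * t) * t := by rw [mul_assoc, ht.mul_self, mul_one]
  have htt : t * t * t⁻¹ = t := by rw [ht.mul_self, one_mul, ht.inv]
  have h1 : eta cs (w * t) t = 1 := by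
    rcases Int.units_eq_one_or (eta cs (w * t) t) with h | h
    · exact h
    · exfalso
      have := (hmp _ h).2
      rw [mul_assoc, ht.mul_self, mul_one] at this
      omega
  calc eta cs w t = eta cs ((w * t) * t) t := by rw [← hw]
    _ = eta cs (w * t) (t * t * t⁻¹) * eta cs t t := by rw [eta_mul]
    _ = eta cs (w * t) t * (-1) := by rw [htt, eta_reflection_self cs ht]
    _ = -1 := by rw [h1, one_mul]

lemma isRightInversion_of_eta_eq_neg_one {w t : W} (h : eta cs w t = -1) :
    cs.IsRightInversion w t := by
  obtain ⟨ω, hlen, rfl⟩ := cs.exists_reduced_word w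
  have hred : cs.IsReduced ω := hlen
  rw [eta_eq_count] at h
  have hodd : count t (cs.rightInvSeq ω) ≠ 0 := by
    intro h0
    rw [h0] at h
    simp at h
  have hmem : t ∈ cs.rightInvSeq ω := by
    rw [← count_pos_iff]
    omega
  exact cs.isRightInversion_of_mem_rightInvSeq hred hmem

lemma isRightInversion_iff_eta {w t : W} (ht : cs.IsReflection t) :
    cs.IsRightInversion w t ↔ eta cs w t = -1 := by
  constructor
  · intro h
    exact eta_eq_neg_one_of_isRightInversion cs h
      (fun u hu => isRightInversion_of_eta_eq_neg_one cs hu)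
  · exact isRightInversion_of_eta_eq_neg_one cs

/-- The crucial fact: an element of maximal length squares to the identity. -/
theorem longest_mul_self {wS : W} (hwS : ∀ w : W, ℓ w ≤ ℓ wS) : wS * wS = 1 := by
  have hall : ∀ t : W, cs.IsReflection t → eta cs wS t = -1 := by
    intro t ht
    rw [← isRightInversion_iff_eta cs ht]
    exact ⟨ht, lt_of_le_of_ne (hwS _) (ht.length_mul_left_ne wS)⟩
  by_contra h
  obtain ⟨k, hk⟩ := cs.exists_rightDescent_of_ne_one h
  have hinv : cs.IsRightInversion (wS * wS) (σs k) :=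
    (cs.isRightInversion_simple_iff_isRightDescent _ k).mpr hk
  have h1 : eta cs (wS * wS) (σs k) = -1 :=
    (isRightInversion_iff_eta cs (cs.isReflection_simple k)).mp hinv
  rw [eta_mul] at h1
  rw [hall _ ((cs.isReflection_simple k).conj wS), hall _ (cs.isReflection_simple k)] at h1
  simp at h1


/-! ### Conjugation by the longest element -/

lemma wordProd_map_conj {wS : W} {σ' : B ≃ B} (hσ : ∀ i, σs (σ' i) = wS * σs i * wS)
    (h2 : wS * wS = 1) (ω : List B) :
    π (ω.map σ') = wS * π ω * wS := by
  induction ω with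
  | nil =>
    rw [List.map_nil, cs.wordProd_nil, mul_one, h2]
  | cons i ω ih =>
    rw [List.map_cons, cs.wordProd_cons, ih]
    calc σs (σ' i) * (wS * π ω * wS) = wS * σs i * (wS * wS) * π ω * wS := by
          rw [hσ]; group
      _ = wS * π (i :: ω) * wS := by rw [h2, cs.wordProd_cons]; group

lemma length_conj {wS : W} {σ' : B ≃ B} (hσ : ∀ i, σs (σ' i) = wS * σs i * wS)
    (h2 : wS * wS = 1) (u : W) :
    ℓ (wS * u * wS) = ℓ u := by
  have hle : ∀ v : W, ℓ (wS * v * wS) ≤ ℓ v := by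
    intro v
    obtain ⟨ω, hlen, rfl⟩ := cs.exists_reduced_word v
    rw [← wordProd_map_conj cs hσ h2]
    calc ℓ (π (ω.map σ')) ≤ (ω.map σ').length := cs.length_wordProd_le _
      _ = ω.length := List.length_map _
      _ = ℓ (π ω) := hlen.symm
  apply le_antisymm (hle u)
  have h := hle (wS * u * wS)
  rw [show wS * (wS * u * wS) * wS = (wS * wS) * u * (wS * wS) by group, h2, one_mul,
    mul_one] at h
  exact h

/-! ### List helper -/

/-- Enumeration of a list (replacement for the removed `List.enum`). -/
def enum {α : Type*} (l : List α) : List (ℕ × α) := l.zipIdx.map Prod.swap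

lemma enum_nil' {α : Type*} : enum ([] : List α) = [] := rfl

lemma enum_cons' {α : Type*} (a : α) (l : List α) :
    enum (a :: l) = (0, a) :: (enum l).map (Prod.map (· + 1) id) := by
  simp only [enum, List.zipIdx_cons', List.map_cons, List.map_map]
  rfl

lemma sum_map_pairBind {α : Type*} {A : Type*} [AddCommMonoid A] (a : α) (L : List (List α))
    (f : List α → A) :
    ((L.flatMap (fun x => [x, a :: x])).map f).sum
      = (L.map (fun x => f x + f (a :: x))).sum := by
  induction L with
  | nil => rfl
  | cons x L ih =>
    rw [List.flatMap_cons, List.map_append, List.sum_append, ih, List.map_cons, List.sum_cons]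
    simp [add_assoc]

lemma fst_lt_of_mem_enum {α : Type*} {l : List α} {p : ℕ × α} (h : p ∈ (enum l)) :
    p.1 < l.length := by
  simp only [enum, List.mem_map] at h
  obtain ⟨⟨x, i⟩, hq, rfl⟩ := h
  exact (List.mem_zipIdx' hq).1


/-! ### The dCoef recurrences -/

section DCoefLemmas

variable {A : Type*} [CommRing A] (act : W →* RingAut A) (αr : B → A)

lemma act_mul_apply (u v : W) (x : A) : act (u * v) x = act u (act v x) := by
  rw [map_mul]; rfl

lemma act_one_apply (x : A) : act (1 : W) x = x := by
  rw [map_one]; rfl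

/-- The summand of `dCoef`. -/
noncomputable def dTerm (l : List B) (v : W) (s : List (ℕ × B)) : A :=
  if cs.wordProd (s.map Prod.snd) = v ∧ (s.map Prod.snd).length = cs.length v then
    (s.map (fun p => act (cs.wordProd (l.take p.1)) (αr p.2))).prod
  else 0

lemma dCoef_eq_sum_dTerm (l : List B) (v : W) :
    dCoef cs act αr l v = ((enum l).sublists.map (dTerm cs act αr l v)).sum := rfl

lemma map_snd_shift (s : List (ℕ × B)) :
    (s.map (Prod.map (· + 1) id)).map Prod.snd = s.map Prod.snd := by
  rw [List.map_map]
  rfl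

lemma dCoef_nil (v : W) : dCoef cs act αr [] v = if v = 1 then 1 else 0 := by
  rw [dCoef_eq_sum_dTerm]
  simp only [enum_nil', List.sublists_nil, List.map_cons, List.map_nil, List.sum_cons,
    List.sum_nil, add_zero]
  unfold dTerm
  simp only [List.map_nil, cs.wordProd_nil, List.length_nil, List.prod_nil]
  by_cases hv : v = 1
  · rw [if_pos hv, if_pos]
    exact ⟨hv.symm, by rw [hv, cs.length_one]⟩
  · rw [if_neg hv, if_neg]
    rintro ⟨h1, -⟩
    exact hv h1.symm

lemma dTerm_shift (i : B) (t : List B) (v : W) (s : List (ℕ × B)) :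
    dTerm cs act αr (i :: t) v (s.map (Prod.map (· + 1) id))
      = act (σs i) (dTerm cs act αr t v s) := by
  unfold dTerm
  rw [map_snd_shift, apply_ite (act (σs i)), map_zero]
  by_cases hcond : cs.wordProd (s.map Prod.snd) = v ∧ (s.map Prod.snd).length = ℓ v
  · rw [if_pos hcond, if_pos hcond]
    rw [map_list_prod (act (σs i)), List.map_map, List.map_map]
    apply congrArg List.prod
    apply List.map_congr_left
    rintro ⟨n, b⟩ -
    show (act (π ((i :: t).take (n + 1)))) (αr b) = (act (σs i)) ((act (π (t.take n))) (αr b))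
    rw [List.take_succ_cons, cs.wordProd_cons, act_mul_apply]
  · rw [if_neg hcond, if_neg hcond]

lemma dTerm_cons_zero (i : B) (t : List B) (v : W) (s : List (ℕ × B)) :
    dTerm cs act αr (i :: t) v ((0, i) :: s.map (Prod.map (· + 1) id))
      = if ℓ (σs i * v) < ℓ v then αr i * act (σs i) (dTerm cs act αr t (σs i * v) s)
        else 0 := by
  unfold dTerm
  have hsnd : ((0, i) :: s.map (Prod.map (· + 1) id)).map Prod.snd = i :: s.map Prod.snd := by
    rw [List.map_cons, map_snd_shift]
  rw [hsnd]
  have hC1 : (cs.wordProd (i :: s.map Prod.snd) = v ∧ (i :: s.map Prod.snd).length = ℓ v)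
      ↔ (σs i * cs.wordProd (s.map Prod.snd) = v ∧ (s.map Prod.snd).length + 1 = ℓ v) := by
    rw [cs.wordProd_cons, List.length_cons]
  by_cases hc : ℓ (σs i * v) < ℓ v
  · have hlen : ℓ (σs i * v) + 1 = ℓ v := by
      rcases cs.length_simple_mul v i with h | h <;> omega
    rw [if_pos hc]
    by_cases hcond : cs.wordProd (s.map Prod.snd) = σs i * v
        ∧ (s.map Prod.snd).length = ℓ (σs i * v)
    · have hc1 : cs.wordProd (i :: s.map Prod.snd) = v ∧ (i :: s.map Prod.snd).length = ℓ v := by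
        rw [hC1]
        constructor
        · rw [hcond.1, cs.simple_mul_simple_cancel_left]
        · omega
      rw [if_pos hc1, if_pos hcond, List.map_cons, List.prod_cons]
      congr 1
      · show (act (π ((i :: t).take 0))) (αr i) = αr i
        rw [List.take_zero, cs.wordProd_nil, act_one_apply]
      · rw [map_list_prod (act (σs i)), List.map_map, List.map_map]
        apply congrArg List.prod
        apply List.map_congr_left
        rintro ⟨n, b⟩ -
        show (act (π ((i :: t).take (n + 1)))) (αr b)
            = (act (σs i)) ((act (π (t.take n))) (αr b))
        rw [List.take_succ_cons, cs.wordProd_cons, act_mul_apply]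
    · rw [if_neg hcond, map_zero, mul_zero, if_neg]
      intro hc1
      obtain ⟨h1, h2⟩ := hC1.mp hc1
      apply hcond
      constructor
      · rw [← h1, cs.simple_mul_simple_cancel_left]
      · omega
  · rw [if_neg hc, if_neg]
    intro hc1
    obtain ⟨h1, h2⟩ := hC1.mp hc1
    have hge : ℓ (σs i * v) = ℓ v + 1 := by
      rcases cs.length_simple_mul v i with h | h <;> omega
    have hle : ℓ (σs i * v) ≤ (s.map Prod.snd).length := by
      have h1' : cs.wordProd (s.map Prod.snd) = σs i * v := by
        rw [← h1, cs.simple_mul_simple_cancel_left]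
      rw [← h1']
      exact cs.length_wordProd_le _
    omega

lemma dCoef_cons (i : B) (t : List B) (v : W) :
    dCoef cs act αr (i :: t) v =
      act (σs i) (dCoef cs act αr t v)
        + if ℓ (σs i * v) < ℓ v then αr i * act (σs i) (dCoef cs act αr t (σs i * v))
          else 0 := by
  rw [dCoef_eq_sum_dTerm]
  rw [enum_cons', List.sublists_cons,
    List.bind_eq_flatMap, sum_map_pairBind, List.sublists_map, List.map_map]
  have hmap : (List.map
      ((fun x => dTerm cs act αr (i :: t) v x + dTerm cs act αr (i :: t) v ((0, i) :: x)) ∘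
        List.map (Prod.map (· + 1) id)) (enum t).sublists)
      = List.map (fun s => act (σs i) (dTerm cs act αr t v s)
          + if ℓ (σs i * v) < ℓ v then αr i * act (σs i) (dTerm cs act αr t (σs i * v) s)
            else 0) (enum t).sublists := by
    apply List.map_congr_left
    intro s _
    simp only [Function.comp_apply]
    rw [dTerm_shift, dTerm_cons_zero]
  rw [hmap, List.sum_map_add]
  congr 1
  · rw [dCoef_eq_sum_dTerm, map_list_sum (act (σs i)), List.map_map]
    rfl
  · by_cases hc : ℓ (σs i * v) < ℓ v
    · simp only [if_pos hc]
      rw [dCoef_eq_sum_dTerm, map_list_sum (act (σs i)), List.map_map,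
        ← List.sum_map_mul_left]
      rfl
    · simp only [if_neg hc]
      simp

lemma dTerm_append_sub (t : List B) (j : B) (v : W) (s : List (ℕ × B))
    (hs : s ∈ (enum t).sublists) :
    dTerm cs act αr (t ++ [j]) v s = dTerm cs act αr t v s := by
  unfold dTerm
  have hsub : ∀ p ∈ s, p.1 < t.length := by
    intro p hp
    exact fst_lt_of_mem_enum ((List.mem_sublists.mp hs).subset hp)
  by_cases hcond : cs.wordProd (s.map Prod.snd) = v ∧ (s.map Prod.snd).length = ℓ v
  · rw [if_pos hcond, if_pos hcond]
    apply congrArg List.prod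
    apply List.map_congr_left
    intro p hp
    have : (t ++ [j]).take p.1 = t.take p.1 := by
      rw [List.take_append, Nat.sub_eq_zero_of_le (le_of_lt (hsub p hp)),
        List.take_zero, List.append_nil]
    rw [this]
  · rw [if_neg hcond, if_neg hcond]

lemma dTerm_append_concat (t : List B) (j : B) (v : W) (s : List (ℕ × B))
    (hs : s ∈ (enum t).sublists) :
    dTerm cs act αr (t ++ [j]) v (s ++ [(t.length, j)])
      = if ℓ (v * σs j) < ℓ v then dTerm cs act αr t (v * σs j) s * act (π t) (αr j)
        else 0 := by
  unfold dTerm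
  have hsub : ∀ p ∈ s, p.1 < t.length := by
    intro p hp
    exact fst_lt_of_mem_enum ((List.mem_sublists.mp hs).subset hp)
  have hsnd : ((s ++ [(t.length, j)]).map Prod.snd) = s.map Prod.snd ++ [j] := by
    rw [List.map_append]
    rfl
  rw [hsnd]
  have hC1 : (cs.wordProd (s.map Prod.snd ++ [j]) = v ∧ (s.map Prod.snd ++ [j]).length = ℓ v)
      ↔ (cs.wordProd (s.map Prod.snd) * σs j = v ∧ (s.map Prod.snd).length + 1 = ℓ v) := by
    rw [cs.wordProd_append, cs.wordProd_singleton, List.length_append]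
    rfl
  by_cases hc : ℓ (v * σs j) < ℓ v
  · have hlen : ℓ (v * σs j) + 1 = ℓ v := by
      rcases cs.length_mul_simple v j with h | h <;> omega
    rw [if_pos hc]
    by_cases hcond : cs.wordProd (s.map Prod.snd) = v * σs j
        ∧ (s.map Prod.snd).length = ℓ (v * σs j)
    · have hc1 : cs.wordProd (s.map Prod.snd ++ [j]) = v
          ∧ (s.map Prod.snd ++ [j]).length = ℓ v := by
        rw [hC1]
        constructor
        · rw [hcond.1, cs.simple_mul_simple_cancel_right]
        · omega
      rw [if_pos hc1, if_pos hcond, List.map_append, List.prod_append]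
      congr 1
      · apply congrArg List.prod
        apply List.map_congr_left
        intro p hp
        have htake : (t ++ [j]).take p.1 = t.take p.1 := by
          rw [List.take_append, Nat.sub_eq_zero_of_le (le_of_lt (hsub p hp)),
            List.take_zero, List.append_nil]
        rw [htake]
      · show (act (π ((t ++ [j]).take t.length))) (αr j) * 1 = (act (π t)) (αr j)
        rw [mul_one, List.take_left]
    · rw [if_neg hcond, zero_mul, if_neg]
      intro hc1
      obtain ⟨h1, h2⟩ := hC1.mp hc1
      apply hcond
      constructor
      · rw [← h1, cs.simple_mul_simple_cancel_right]
      · omega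
  · rw [if_neg hc, if_neg]
    intro hc1
    obtain ⟨h1, h2⟩ := hC1.mp hc1
    have hge : ℓ (v * σs j) = ℓ v + 1 := by
      rcases cs.length_mul_simple v j with h | h <;> omega
    have hle : ℓ (v * σs j) ≤ (s.map Prod.snd).length := by
      have h1' : cs.wordProd (s.map Prod.snd) = v * σs j := by
        rw [← h1, cs.simple_mul_simple_cancel_right]
      rw [← h1']
      exact cs.length_wordProd_le _
    omega

lemma dCoef_concat (t : List B) (j : B) (v : W) :
    dCoef cs act αr (t ++ [j]) v =
      dCoef cs act αr t v
        + if ℓ (v * σs j) < ℓ v then dCoef cs act αr t (v * σs j) * act (π t) (αr j)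
          else 0 := by
  rw [dCoef_eq_sum_dTerm]
  have henum : (enum (t ++ [j])) = (enum t) ++ [(t.length, j)] := by
    simp [enum, List.zipIdx_append]
  rw [henum, List.sublists_concat, List.map_append, List.sum_append, List.map_map]
  congr 1
  · rw [dCoef_eq_sum_dTerm]
    apply congrArg List.sum
    apply List.map_congr_left
    intro s hs
    exact dTerm_append_sub cs act αr t j v s hs
  · have hmap : (List.map (dTerm cs act αr (t ++ [j]) v ∘ fun x => x ++ [(t.length, j)])
        (enum t).sublists)
        = List.map (fun s => if ℓ (v * σs j) < ℓ v
            then dTerm cs act αr t (v * σs j) s * act (π t) (αr j) else 0) (enum t).sublists := by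
      apply List.map_congr_left
      intro s hs
      simp only [Function.comp_apply]
      exact dTerm_append_concat cs act αr t j v s hs
    rw [hmap]
    by_cases hc : ℓ (v * σs j) < ℓ v
    · simp only [if_pos hc]
      rw [dCoef_eq_sum_dTerm, ← List.sum_map_mul_right]
    · simp only [if_neg hc]
      simp

end DCoefLemmas

end DCoefAux

/-- In a finite Weyl group with longest element `w_S`, writing `w^σ = w_S w w_S`,
the localization coefficients satisfy `d_{(x^σ)⁻¹,(y^σ)⁻¹} = w_S y⁻¹ · d_{x,y}`.
Here `σ : B ≃ B` is the induced involution of the simple reflections, and the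
`d`-coefficients are computed from a reduced word `l` of `y` and the corresponding
reduced word `l.reverse.map σ` of `(y^σ)⁻¹`. -/
theorem dCoef_star_conjugate {B W A : Type*} [Group W] [Finite W] [CommRing A]
    {M : CoxeterMatrix B} (cs : CoxeterSystem M W)
    (act : W →* RingAut A) (αr : B → A)
    (wS : W) (hwS : ∀ w : W, cs.length w ≤ cs.length wS)
    (σ : B ≃ B) (hσ : ∀ i, cs.simple (σ i) = wS * cs.simple i * wS)
    (hlongestneg : ∀ i, act wS (αr i) = - αr (σ i))
    (hsimpleneg : ∀ i, act (cs.simple i) (αr i) = - αr i)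
    (x y : W) (l : List B) (hl : cs.IsReduced l) (hly : cs.wordProd l = y) :
    dCoef cs act αr (l.reverse.map σ) (wS * x⁻¹ * wS) =
      act (wS * y⁻¹) (dCoef cs act αr l x) := by
  have h2 : wS * wS = 1 := DCoefAux.longest_mul_self cs hwS
  have hlen : ∀ u : W, cs.length (wS * u * wS) = cs.length u :=
    DCoefAux.length_conj cs hσ h2
  subst hly
  clear hl hwS
  induction l generalizing x with
  | nil =>
    rw [List.reverse_nil, List.map_nil, DCoefAux.dCoef_nil, DCoefAux.dCoef_nil,
      cs.wordProd_nil, inv_one, mul_one]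
    have hiff : wS * x⁻¹ * wS = 1 ↔ x = 1 := by
      constructor
      · intro h
        have hx : x⁻¹ = wS * (wS * x⁻¹ * wS) * wS := by
          rw [show wS * (wS * x⁻¹ * wS) * wS = (wS * wS) * x⁻¹ * (wS * wS) by group, h2,
            one_mul, mul_one]
        rw [h, mul_one, h2] at hx
        rw [← inv_inv x, hx, inv_one]
      · intro h
        rw [h, inv_one, mul_one, h2]
    by_cases hx : x = 1
    · rw [if_pos (hiff.mpr hx), if_pos hx, map_one]
    · rw [if_neg (fun h => hx (hiff.mp h)), if_neg hx, map_zero]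
  | cons i t ih =>
    rw [List.reverse_cons, List.map_append, List.map_cons, List.map_nil]
    rw [DCoefAux.dCoef_concat, DCoefAux.dCoef_cons, cs.wordProd_cons]
    have hπm : cs.wordProd (t.reverse.map σ) = wS * (cs.wordProd t)⁻¹ * wS := by
      rw [DCoefAux.wordProd_map_conj cs hσ h2, cs.wordProd_reverse]
    have harg : wS * x⁻¹ * wS * cs.simple (σ i) = wS * (cs.simple i * x)⁻¹ * wS := by
      rw [hσ i, mul_inv_rev, cs.inv_simple]
      rw [show wS * x⁻¹ * wS * (wS * cs.simple i * wS)
          = wS * x⁻¹ * (wS * wS) * cs.simple i * wS by group, h2]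
      group
    have hcond : (cs.length (wS * x⁻¹ * wS * cs.simple (σ i)) < cs.length (wS * x⁻¹ * wS))
        ↔ (cs.length (cs.simple i * x) < cs.length x) := by
      rw [harg, hlen, hlen, cs.length_inv, cs.length_inv]
    have hsplit : wS * (cs.simple i * cs.wordProd t)⁻¹
        = (wS * (cs.wordProd t)⁻¹) * cs.simple i := by
      rw [mul_inv_rev, cs.inv_simple, ← mul_assoc]
    rw [map_add]
    congr 1
    · rw [ih]
      rw [← DCoefAux.act_mul_apply]
      congr 2
      rw [hsplit, cs.simple_mul_simple_cancel_right]
    · by_cases hc : cs.length (cs.simple i * x) < cs.length x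
      · rw [if_pos (hcond.mpr hc), if_pos hc]
        rw [harg, ih]
        have hαr : αr (σ i) = - act wS (αr i) := by rw [hlongestneg i, neg_neg]
        have hfac : act (cs.wordProd (t.reverse.map σ)) (αr (σ i))
            = - act (wS * (cs.wordProd t)⁻¹) (αr i) := by
          rw [hπm, hαr, map_neg, ← DCoefAux.act_mul_apply]
          congr 2
          rw [mul_assoc (wS * (cs.wordProd t)⁻¹), h2, mul_one]
        rw [hfac]
        rw [map_mul (act (wS * (cs.simple i * cs.wordProd t)⁻¹))]
        have hfac2 : act (wS * (cs.simple i * cs.wordProd t)⁻¹) (αr i)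
            = - act (wS * (cs.wordProd t)⁻¹) (αr i) := by
          rw [hsplit, DCoefAux.act_mul_apply, hsimpleneg, map_neg]
        have hfac3 : ∀ z : A, act (wS * (cs.simple i * cs.wordProd t)⁻¹) (act (cs.simple i) z)
            = act (wS * (cs.wordProd t)⁻¹) z := by
          intro z
          rw [← DCoefAux.act_mul_apply]
          congr 2
          rw [hsplit, cs.simple_mul_simple_cancel_right]
        rw [hfac2, hfac3]
        ring
      · rw [if_neg (fun h => hc (hcond.mp h)), if_neg hc, map_zero]
end

section
/- Suppose x, u, v are elements of a Coxeter group with ℓ(uv) = ℓ(u) + ℓ(v). Then d_{x,uv} = Σ d_{u',u}·(u · d_{v',v}), where the sum is over pairs (u', v') with x = u'v' and ℓ(x) = ℓ(u') + ℓ(v'). -/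
open scoped Classical

section Aux

variable {B W A : Type*} [Group W] [CommRing A] {M : CoxeterMatrix B}

/-- The word-product of the letters of an indexed subword. -/
noncomputable def wpd (cs : CoxeterSystem M W) (s : List (ℕ × B)) : W :=
  cs.wordProd (s.map Prod.snd)

/-- The product of roots associated to an indexed subword. -/
noncomputable def pid (cs : CoxeterSystem M W) (act : W →* RingAut A) (αr : B → A)
    (l : List B) (s : List (ℕ × B)) : A :=
  (s.map (fun p => act (cs.wordProd (l.take p.1)) (αr p.2))).prod

/-- The summand of `dCoef`. -/
noncomputable def fd (cs : CoxeterSystem M W) (act : W →* RingAut A) (αr : B → A)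
    (l : List B) (y : W) (s : List (ℕ × B)) : A :=
  if wpd cs s = y ∧ s.length = cs.length y then pid cs act αr l s else 0

lemma list_sum_flatMap {α β M : Type*} [AddCommMonoid M] (l : List α) (g : α → List β)
    (f : β → M) : ((l.flatMap g).map f).sum = (l.map (fun a => ((g a).map f).sum)).sum := by
  induction l with
  | nil => simp
  | cons a l ih => simp [List.flatMap_cons, ih]

lemma nodup_enum_sublists (l : List B) : (l.zipIdx.map Prod.swap).sublists.Nodup :=
  List.nodup_sublists.mpr (List.Nodup.of_map Prod.fst
    (by rw [List.map_map]; show (List.map Prod.snd (l.zipIdx 0)).Nodup;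
         rw [List.zipIdx_map_snd]; exact List.nodup_range'))

lemma dCoef_eq_finset_sum (cs : CoxeterSystem M W) (act : W →* RingAut A) (αr : B → A)
    (l : List B) (y : W) :
    dCoef cs act αr l y = ∑ s ∈ (l.zipIdx.map Prod.swap).sublists.toFinset, fd cs act αr l y s := by
  rw [List.sum_toFinset _ (nodup_enum_sublists l), dCoef]
  congr 1
  apply List.map_congr_left
  intro s _
  simp [fd, wpd, pid]
  exact if_congr Iff.rfl rfl rfl

lemma dCoef_ne_zero_exists (cs : CoxeterSystem M W) (act : W →* RingAut A) (αr : B → A)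
    (l : List B) (y : W) (h : dCoef cs act αr l y ≠ 0) :
    ∃ s ∈ (l.zipIdx.map Prod.swap).sublists.toFinset, wpd cs s = y := by
  by_contra hc
  push_neg at hc
  apply h
  rw [dCoef]
  apply List.sum_eq_zero
  intro a ha
  simp only [List.mem_map] at ha
  obtain ⟨s, hs, rfl⟩ := ha
  rw [if_neg]
  rintro ⟨h1, -⟩
  exact hc s (List.mem_toFinset.mpr hs) h1

lemma key_cond (cs : CoxeterSystem M W) (x w1 w2 : W) (m1 m2 : ℕ)
    (h1 : cs.length w1 ≤ m1) (h2 : cs.length w2 ≤ m2) :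
    (w1 * w2 = x ∧ m1 + m2 = cs.length x) ↔
      ((x = w1 * w2 ∧ cs.length x = cs.length w1 + cs.length w2) ∧
        m1 = cs.length w1 ∧ m2 = cs.length w2) := by
  constructor
  · rintro ⟨rfl, hm⟩
    have hle := cs.length_mul_le w1 w2
    refine ⟨⟨rfl, by omega⟩, by omega, by omega⟩
  · rintro ⟨⟨rfl, hx⟩, hm1, hm2⟩
    exact ⟨rfl, by omega⟩

end Aux

/-- If `ℓ(uv) = ℓ(u) + ℓ(v)` then
`d_{x,uv} = Σ d_{u',u} · (u · d_{v',v})`, summed over pairs `(u', v')` with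
`x = u'v'` and `ℓ(x) = ℓ(u') + ℓ(v')`.  The coefficients are computed from reduced
words `lu` for `u` and `lv` for `v` (so that `lu ++ lv` is a reduced word for `uv`). -/
theorem dCoef_length_additive_product {B W A : Type*} [Group W] [CommRing A]
    {M : CoxeterMatrix B} (cs : CoxeterSystem M W)
    (act : W →* RingAut A) (αr : B → A)
    (x u v : W) (hlen : cs.length (u * v) = cs.length u + cs.length v)
    (lu lv : List B) (hlu : cs.IsReduced lu) (hlur : cs.wordProd lu = u)
    (hlv : cs.IsReduced lv) (hlvr : cs.wordProd lv = v) :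
    dCoef cs act αr (lu ++ lv) x =
      ∑ᶠ p ∈ {p : W × W | x = p.1 * p.2 ∧ cs.length x = cs.length p.1 + cs.length p.2},
        dCoef cs act αr lu p.1 * act u (dCoef cs act αr lv p.2) := by
  classical
  set sh : ℕ × B → ℕ × B := Prod.map (fun k => k + lu.length) id with hsh
  set Su := (lu.zipIdx.map Prod.swap).sublists.toFinset with hSu
  set Sv := (lv.zipIdx.map Prod.swap).sublists.toFinset with hSv
  -- the condition set
  set S : Set (W × W) :=
    {p : W × W | x = p.1 * p.2 ∧ cs.length x = cs.length p.1 + cs.length p.2} with hS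
  -- Step 1: LHS as a double sum
  have hLHS : dCoef cs act αr (lu ++ lv) x =
      ∑ s2 ∈ Sv, ∑ s1 ∈ Su,
        (if (x = wpd cs s1 * wpd cs s2 ∧
              cs.length x = cs.length (wpd cs s1) + cs.length (wpd cs s2)) ∧
            s1.length = cs.length (wpd cs s1) ∧ s2.length = cs.length (wpd cs s2) then
          pid cs act αr lu s1 * act u (pid cs act αr lv s2) else 0) := by
    rw [dCoef]
    have hzi : (lv.zipIdx (0 + lu.length)).map Prod.swap =
        (lv.zipIdx.map Prod.swap).map (Prod.map (fun k => k + lu.length) id) := by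
      have := @List.map_snd_add_zipIdx_eq_zipIdx B lv lu.length 0
      rw [Nat.add_zero] at this
      rw [Nat.zero_add, ← this, List.map_map, List.map_map]
      congr 1
    rw [List.zipIdx_append, List.map_append, hzi,
      List.sublists_append]
    rw [show ((List.map (Prod.map (fun k => k + lu.length) id) (lv.zipIdx.map Prod.swap)).sublists >>=
        fun s2 => (lu.zipIdx.map Prod.swap).sublists.map (· ++ s2)) =
        (((lv.zipIdx.map Prod.swap).sublists.map (List.map sh)).flatMap
          fun s2 => (lu.zipIdx.map Prod.swap).sublists.map (· ++ s2)) from by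
      rw [List.sublists_map]; rfl]
    rw [list_sum_flatMap, List.map_map, ← List.sum_toFinset _ (nodup_enum_sublists lv)]
    refine Finset.sum_congr rfl fun s2 hs2 => ?_
    simp only [Function.comp_apply, List.map_map]
    rw [← List.sum_toFinset _ (nodup_enum_sublists lu)]
    refine Finset.sum_congr rfl fun s1 hs1 => ?_
    have hs1' : s1.Sublist (lu.zipIdx.map Prod.swap) := List.mem_sublists.mp (List.mem_toFinset.mp hs1)
    have hs2' : s2.Sublist (lv.zipIdx.map Prod.swap) := List.mem_sublists.mp (List.mem_toFinset.mp hs2)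
    simp only [Function.comp_apply]
    -- simplify the second projections
    have hsnd : (s2.map sh).map Prod.snd = s2.map Prod.snd := by
      rw [List.map_map]; rfl
    -- the condition
    have hcond : (cs.wordProd ((s1 ++ s2.map sh).map Prod.snd) = x ∧
        ((s1 ++ s2.map sh).map Prod.snd).length = cs.length x) ↔
        ((x = wpd cs s1 * wpd cs s2 ∧
          cs.length x = cs.length (wpd cs s1) + cs.length (wpd cs s2)) ∧
          s1.length = cs.length (wpd cs s1) ∧ s2.length = cs.length (wpd cs s2)) := by
      rw [List.map_append, hsnd, cs.wordProd_append, List.length_append,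
        List.length_map, List.length_map]
      exact key_cond cs x (wpd cs s1) (wpd cs s2) s1.length s2.length
        (by simpa [wpd] using cs.length_wordProd_le (s1.map Prod.snd))
        (by simpa [wpd] using cs.length_wordProd_le (s2.map Prod.snd))
    -- the product
    have hprod : ((s1 ++ s2.map sh).map
          (fun p => act (cs.wordProd ((lu ++ lv).take p.1)) (αr p.2))).prod =
        pid cs act αr lu s1 * act u (pid cs act αr lv s2) := by
      rw [List.map_append, List.prod_append]
      congr 1
      · apply congrArg List.prod
        apply List.map_congr_left
        intro p hp
        have hple : p.1 < lu.length := by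
            obtain ⟨q, hq, rfl⟩ := List.mem_map.mp (hs1'.subset hp)
            simpa using List.snd_lt_of_mem_zipIdx hq
        rw [List.take_append_of_le_length hple.le]
      · rw [List.map_map]
        have hmc : ∀ q ∈ s2,
            ((fun p => act (cs.wordProd ((lu ++ lv).take p.1)) (αr p.2)) ∘ sh) q =
            (⇑(act u) ∘ fun q => act (cs.wordProd (lv.take q.1)) (αr q.2)) q := by
          intro q hq
          show act (cs.wordProd ((lu ++ lv).take (q.1 + lu.length))) (αr q.2) = _
          rw [Nat.add_comm, List.take_length_add_append, cs.wordProd_append, hlur, map_mul]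
          rfl
        rw [List.map_congr_left hmc, ← List.map_map, ← map_list_prod (act u)]
        rfl
    rw [hprod] at *
    exact if_congr hcond rfl rfl
  -- Step 2: RHS as a finite sum
  set T : Finset (W × W) :=
    ((Su.image (wpd cs)) ×ˢ (Sv.image (wpd cs))).filter (fun p => p ∈ S) with hT
  have hRHS : ∑ᶠ p ∈ S, dCoef cs act αr lu p.1 * act u (dCoef cs act αr lv p.2) =
      ∑ p ∈ T, dCoef cs act αr lu p.1 * act u (dCoef cs act αr lv p.2) := by
    apply finsum_mem_eq_sum_of_inter_support_eq
    ext p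
    simp only [Set.mem_inter_iff, Function.mem_support, Finset.coe_filter, Set.mem_setOf_eq,
      Finset.mem_product, Finset.mem_image, hT]
    constructor
    · rintro ⟨hpS, hne⟩
      have h1 : dCoef cs act αr lu p.1 ≠ 0 := by
        intro h0; exact hne (by rw [h0, zero_mul])
      have h2 : dCoef cs act αr lv p.2 ≠ 0 := by
        intro h0; exact hne (by rw [h0, map_zero, mul_zero])
      obtain ⟨t1, ht1, ht1'⟩ := dCoef_ne_zero_exists cs act αr lu p.1 h1
      obtain ⟨t2, ht2, ht2'⟩ := dCoef_ne_zero_exists cs act αr lv p.2 h2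
      exact ⟨⟨⟨⟨t1, ht1, ht1'⟩, ⟨t2, ht2, ht2'⟩⟩, hpS⟩, hne⟩
    · rintro ⟨⟨-, hpS⟩, hne⟩
      exact ⟨hpS, hne⟩
  rw [hLHS, hRHS]
  -- Step 3: expand the RHS and swap sums
  have hexp : ∀ p ∈ T, dCoef cs act αr lu p.1 * act u (dCoef cs act αr lv p.2) =
      ∑ s1 ∈ Su, ∑ s2 ∈ Sv,
        fd cs act αr lu p.1 s1 * act u (fd cs act αr lv p.2 s2) := by
    intro p _
    rw [dCoef_eq_finset_sum cs act αr lu p.1, dCoef_eq_finset_sum cs act αr lv p.2,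
      map_sum, Finset.sum_mul_sum]
  rw [Finset.sum_congr rfl hexp]
  have hswap :
      (∑ p ∈ T, ∑ s1 ∈ Su, ∑ s2 ∈ Sv,
        fd cs act αr lu p.1 s1 * act u (fd cs act αr lv p.2 s2)) =
      ∑ s2 ∈ Sv, ∑ s1 ∈ Su, ∑ p ∈ T,
        fd cs act αr lu p.1 s1 * act u (fd cs act αr lv p.2 s2) :=
    calc (∑ p ∈ T, ∑ s1 ∈ Su, ∑ s2 ∈ Sv,
            fd cs act αr lu p.1 s1 * act u (fd cs act αr lv p.2 s2))
        = ∑ s1 ∈ Su, ∑ p ∈ T, ∑ s2 ∈ Sv,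
            fd cs act αr lu p.1 s1 * act u (fd cs act αr lv p.2 s2) := Finset.sum_comm
      _ = ∑ s1 ∈ Su, ∑ s2 ∈ Sv, ∑ p ∈ T,
            fd cs act αr lu p.1 s1 * act u (fd cs act αr lv p.2 s2) :=
          Finset.sum_congr rfl fun s1 _ => Finset.sum_comm
      _ = ∑ s2 ∈ Sv, ∑ s1 ∈ Su, ∑ p ∈ T,
            fd cs act αr lu p.1 s1 * act u (fd cs act αr lv p.2 s2) := Finset.sum_comm
  rw [hswap]
  refine Finset.sum_congr rfl fun s2 hs2 => Finset.sum_congr rfl fun s1 hs1 => ?_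
  -- Step 4: collapse the inner sum over p
  have hsingle : ∀ p : W × W,
      fd cs act αr lu p.1 s1 * act u (fd cs act αr lv p.2 s2) =
      if p = (wpd cs s1, wpd cs s2) then
        (if s1.length = cs.length (wpd cs s1) then pid cs act αr lu s1 else 0) *
          act u (if s2.length = cs.length (wpd cs s2) then pid cs act αr lv s2 else 0)
      else 0 := by
    intro p
    by_cases hp : p = (wpd cs s1, wpd cs s2)
    · subst hp
      simp [fd]
    · rw [if_neg hp]
      rw [Prod.ext_iff, not_and_or] at hp
      rcases hp with hp | hp
      · have h0 : fd cs act αr lu p.1 s1 = 0 := by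
          rw [fd, if_neg]
          rintro ⟨h, -⟩
          exact hp (by simp [h])
        rw [h0, zero_mul]
      · have h0 : fd cs act αr lv p.2 s2 = 0 := by
          rw [fd, if_neg]
          rintro ⟨h, -⟩
          exact hp (by simp [h])
        rw [h0, map_zero, mul_zero]
  rw [Finset.sum_congr rfl fun p _ => hsingle p, Finset.sum_ite_eq' T]
  have hmemT : ((wpd cs s1, wpd cs s2) ∈ T) ↔ ((wpd cs s1, wpd cs s2) ∈ S) := by
    rw [hT, Finset.mem_filter]
    exact and_iff_right (Finset.mem_product.mpr
      ⟨Finset.mem_image.mpr ⟨s1, hs1, rfl⟩, Finset.mem_image.mpr ⟨s2, hs2, rfl⟩⟩)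
  rw [if_congr hmemT rfl rfl]
  have hmemS : ((wpd cs s1, wpd cs s2) ∈ S) ↔
      (x = wpd cs s1 * wpd cs s2 ∧
        cs.length x = cs.length (wpd cs s1) + cs.length (wpd cs s2)) := Iff.rfl
  rw [if_congr hmemS rfl rfl]
  by_cases h0 : (x = wpd cs s1 * wpd cs s2 ∧
      cs.length x = cs.length (wpd cs s1) + cs.length (wpd cs s2)) <;>
    by_cases h1 : s1.length = cs.length (wpd cs s1) <;>
    by_cases h2 : s2.length = cs.length (wpd cs s2) <;>
    simp [h0, h1, h2]
end
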